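/- arXiv:1905.12501 — 7 statements merged into one kernel-verified Lean document; each statement's English description precedes it below -/
import Mathlib

section
/- Let V be a finite dimensional vector space over a field k with n descending, separated, exhaustive filtrations F_1,...,F_n that admit a splitting V = ⊕_{p∈ℤ^n} V^p (meaning F_i^r V = ⊕_{p: p_i ≥ r} V^p for all i, r). Then the Rees module Rees(V) = Σ_{p∈ℤ^n} F^p V ⊗ z^{-p} k[z_1,...,z_n] ⊆ V ⊗ k[z_1^{±1},...,z_n^{±1}] (where F^p = F_1^{p_1} ∩ ... ∩ F_n^{p_n}) is a free k[z_1,...,z_n]-module of rank dim_k V. -/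
namespace ToricRees

open Finsupp

variable {k : Type*} [Field k]

/-- Multi-indices. -/
abbrev MIdx (n : ℕ) := Fin n → ℤ

/-- A descending, separated and exhaustive filtration. -/
structure IsFilt {V : Type*} [AddCommGroup V] [Module k V] (F : ℤ → Submodule k V) : Prop where
  mono : ∀ ⦃p q : ℤ⦄, p ≤ q → F q ≤ F p
  sep : ∃ P : ℤ, ∀ p, P ≤ p → F p = ⊥
  exh : ∃ P : ℤ, ∀ p, p ≤ P → F p = ⊤

variable {n : ℕ} {V W : Type*} [AddCommGroup V] [Module k V] [AddCommGroup W] [Module k W]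

/-- `F^p = F_1^{p_1} ∩ ... ∩ F_n^{p_n}`. -/
def fcap (F : Fin n → ℤ → Submodule k V) (p : MIdx n) : Submodule k V := ⨅ i, F i (p i)

/-- A splitting of an `n`-tuple of filtrations: a `ℤ^n`-grading `V = ⊕_p V^p`
with `F_i^r = ⊕_{p : p_i ≥ r} V^p`. -/
def IsSplitting (F : Fin n → ℤ → Submodule k V) (𝒱 : MIdx n → Submodule k V) : Prop :=
  DirectSum.IsInternal 𝒱 ∧ ∀ (i : Fin n) (r : ℤ), F i r = ⨆ p ∈ {p : MIdx n | r ≤ p i}, 𝒱 p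

def Splittable (F : Fin n → ℤ → Submodule k V) : Prop := ∃ 𝒱, IsSplitting F 𝒱

/-- `D^p = F^p / Σ_i F^{p+e_i}`. -/
noncomputable def Dmod (F : Fin n → ℤ → Submodule k V) (p : MIdx n) :=
  ↥(fcap F p) ⧸
    (Submodule.comap (fcap F p).subtype (⨆ i : Fin n, fcap F (p + Pi.single i 1)))

noncomputable instance (F : Fin n → ℤ → Submodule k V) (p : MIdx n) :
    AddCommGroup (Dmod F p) := by unfold Dmod; infer_instance

noncomputable instance (F : Fin n → ℤ → Submodule k V) (p : MIdx n) :
    Module k (Dmod F p) := by unfold Dmod; infer_instance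

/-- Multiplication by `z^g` on `V ⊗ k[z_1^{±1},...,z_n^{±1}] = (ℤ^n →₀ V)`. -/
noncomputable def shiftL (g : MIdx n) : (MIdx n →₀ V) →ₗ[k] (MIdx n →₀ V) :=
  Finsupp.lmapDomain V k (fun d => d + g)

lemma shiftL_apply (g : MIdx n) (s : MIdx n →₀ V) (d : MIdx n) :
    shiftL (k := k) g s d = s (d - g) := by
  have h : d = (d - g) + g := (sub_add_cancel d g).symm
  rw [h, shiftL]
  simpa using Finsupp.mapDomain_apply (add_left_injective g) s (d - g)

/-- The monoid homomorphism sending a monomial exponent to the corresponding shift. -/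
noncomputable def shiftMonoidHom :
    Multiplicative (Fin n →₀ ℕ) →* Module.End k (MIdx n →₀ V) where
  toFun a := shiftL (fun i => ((Multiplicative.toAdd a) i : ℤ))
  map_one' := LinearMap.ext fun s => Finsupp.ext fun d => by
    rw [shiftL_apply]
    show s _ = s d
    congr 1
    funext i
    simp
  map_mul' a b := LinearMap.ext fun s => Finsupp.ext fun d => by
    show shiftL _ s d = (shiftL _ ∘ₗ shiftL _) s d
    rw [LinearMap.comp_apply, shiftL_apply, shiftL_apply, shiftL_apply]
    congr 1
    funext i
    simp [sub_sub]

/-- The algebra map from `k[z_1,...,z_n]` to endomorphisms of `ℤ^n →₀ V`,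
sending `z^a` to the shift by `a`. -/
noncomputable def polyActionHom (k V : Type*) [Field k] [AddCommGroup V] [Module k V] (n : ℕ) :
    MvPolynomial (Fin n) k →ₐ[k] Module.End k (MIdx n →₀ V) :=
  (AddMonoidAlgebra.lift k (Module.End k (MIdx n →₀ V)) (Fin n →₀ ℕ)) shiftMonoidHom

/-- The `k[z_1,...,z_n]`-module structure on `V ⊗ k[z_1^{±1},...,z_n^{±1}] = (ℤ^n →₀ V)`. -/
noncomputable instance : Module (MvPolynomial (Fin n) k) (MIdx n →₀ V) :=
  Module.compHom _ (polyActionHom k V n).toRingHom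

lemma poly_smul_def (p : MvPolynomial (Fin n) k) (s : MIdx n →₀ V) :
    p • s = polyActionHom k V n p s := rfl

lemma polyActionHom_X (i : Fin n) :
    polyActionHom k V n (MvPolynomial.X i)
      = shiftL (fun j => ((Finsupp.single i 1 : Fin n →₀ ℕ) j : ℤ)) := by
  have hX : (MvPolynomial.X i : MvPolynomial (Fin n) k)
      = AddMonoidAlgebra.single (Finsupp.single i 1) 1 := by
    rw [MvPolynomial.X, MvPolynomial.monomial]
    rfl
  rw [polyActionHom, hX]
  erw [AddMonoidAlgebra.lift_single (shiftMonoidHom (k := k) (n := n) (V := V)) (Finsupp.single i 1) (1 : k)]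
  rw [one_smul]
  rfl

lemma X_smul (i : Fin n) (s : MIdx n →₀ V) :
    (MvPolynomial.X i : MvPolynomial (Fin n) k) • s
      = shiftL (k := k) (fun j => ((Finsupp.single i 1 : Fin n →₀ ℕ) j : ℤ)) s := by
  rw [poly_smul_def, polyActionHom_X]

lemma C_smul (a : k) (s : MIdx n →₀ V) :
    (MvPolynomial.C a : MvPolynomial (Fin n) k) • s = a • s := by
  rw [poly_smul_def]
  have h : (MvPolynomial.C a : MvPolynomial (Fin n) k) = algebraMap k _ a := rfl
  rw [h, AlgHom.commutes]
  rfl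

instance : IsScalarTower k (MvPolynomial (Fin n) k) (MIdx n →₀ V) := by
  constructor
  intro a p s
  rw [poly_smul_def, poly_smul_def, map_smul]
  rfl

/-- The underlying set of the Rees module:
`Rees(V,F) = Σ_p F^p V ⊗ z^{-p} ⊆ V ⊗ k[z^{±1}]`, concretely the set of finitely
supported `V`-valued functions `s` on `ℤ^n` with `s d ∈ F^{-d}`. -/
def ReesSet (F : Fin n → ℤ → Submodule k V) : Set (MIdx n →₀ V) :=
  {s | ∀ d : MIdx n, s d ∈ fcap F (-d)}

lemma shiftL_mem_ReesSet {F : Fin n → ℤ → Submodule k V} (hF : ∀ i, IsFilt (F i))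
    {g : MIdx n} (hg : 0 ≤ g) {s : MIdx n →₀ V} (hs : s ∈ ReesSet F) :
    shiftL (k := k) g s ∈ ReesSet F := by
  intro d
  rw [shiftL_apply]
  have h1 : s (d - g) ∈ fcap F (-(d - g)) := hs _
  refine Submodule.mem_iInf _ |>.2 fun i => ?_
  refine (hF i).mono ?_ ((Submodule.mem_iInf _).1 h1 i)
  have := hg i
  simp only [Pi.neg_apply, Pi.sub_apply, Pi.zero_apply] at *
  omega

lemma polyActionHom_preserves {F : Fin n → ℤ → Submodule k V} (hF : ∀ i, IsFilt (F i))
    (p : MvPolynomial (Fin n) k) :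
    ∀ s ∈ ReesSet F, polyActionHom k V n p s ∈ ReesSet F := by
  have hp : p ∈ (⊤ : Subalgebra k (MvPolynomial (Fin n) k)) := trivial
  rw [← MvPolynomial.adjoin_range_X] at hp
  induction hp using Algebra.adjoin_induction with
  | mem q hq =>
      obtain ⟨i, rfl⟩ := hq
      intro s hs
      rw [polyActionHom_X]
      refine shiftL_mem_ReesSet hF (fun j => ?_) hs
      simp only [Pi.zero_apply]
      positivity
  | algebraMap a =>
      intro s hs
      rw [AlgHom.commutes]
      have : (algebraMap k (Module.End k (MIdx n →₀ V)) a) s = a • s := rfl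
      rw [this]
      intro d
      rw [Finsupp.smul_apply]
      exact Submodule.smul_mem _ _ (hs d)
  | add q r _ _ ihq ihr =>
      intro s hs
      rw [map_add]
      have : (polyActionHom k V n q + polyActionHom k V n r) s
          = polyActionHom k V n q s + polyActionHom k V n r s := rfl
      rw [this]
      intro d
      rw [Finsupp.add_apply]
      exact Submodule.add_mem _ (ihq s hs d) (ihr s hs d)
  | mul q r _ _ ihq ihr =>
      intro s hs
      rw [map_mul]
      exact ihq _ (ihr s hs)

/-- The Rees module `Rees(V,F)` as a `k[z_1,...,z_n]`-submodule of `ℤ^n →₀ V`. -/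
noncomputable def ReesModule (F : Fin n → ℤ → Submodule k V) (hF : ∀ i, IsFilt (F i)) :
    Submodule (MvPolynomial (Fin n) k) (MIdx n →₀ V) where
  carrier := ReesSet F
  zero_mem' := fun d => by simp
  add_mem' := fun {s} {t} hs ht d => by
    rw [Finsupp.add_apply]; exact Submodule.add_mem _ (hs d) (ht d)
  smul_mem' := fun p s hs => by
    rw [poly_smul_def]
    exact polyActionHom_preserves hF p s hs

lemma mem_ReesModule_iff {F : Fin n → ℤ → Submodule k V} {hF : ∀ i, IsFilt (F i)}
    {s : MIdx n →₀ V} : s ∈ ReesModule F hF ↔ ∀ d : MIdx n, s d ∈ fcap F (-d) :=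
  Iff.rfl

lemma mapRange_poly_smul (f : V →ₗ[k] W) (p : MvPolynomial (Fin n) k) (s : MIdx n →₀ V) :
    Finsupp.mapRange.linearMap f (p • s) = p • Finsupp.mapRange.linearMap f s := by
  rw [poly_smul_def, poly_smul_def]
  have hp : p ∈ (⊤ : Subalgebra k (MvPolynomial (Fin n) k)) := trivial
  rw [← MvPolynomial.adjoin_range_X] at hp
  induction hp using Algebra.adjoin_induction generalizing s with
  | mem q hq =>
      obtain ⟨i, rfl⟩ := hq
      rw [polyActionHom_X, polyActionHom_X (V := W)]
      refine Finsupp.ext fun d => ?_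
      rw [Finsupp.mapRange.linearMap_apply, Finsupp.mapRange_apply, shiftL_apply,
        shiftL_apply, Finsupp.mapRange.linearMap_apply, Finsupp.mapRange_apply]
  | algebraMap a =>
      rw [AlgHom.commutes, AlgHom.commutes]
      have h1 : (algebraMap k (Module.End k (MIdx n →₀ V)) a) s = a • s := rfl
      have h2 : ∀ t : MIdx n →₀ W, (algebraMap k (Module.End k (MIdx n →₀ W)) a) t = a • t :=
        fun t => rfl
      rw [h1, h2, map_smul]
  | add q r _ _ ihq ihr =>
      rw [map_add, map_add]
      have h1 : ∀ (q r : Module.End k (MIdx n →₀ V)) (s : MIdx n →₀ V),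
          (q + r) s = q s + r s := fun _ _ _ => rfl
      have h2 : ∀ (q r : Module.End k (MIdx n →₀ W)) (t : MIdx n →₀ W),
          (q + r) t = q t + r t := fun _ _ _ => rfl
      rw [h1, h2, map_add, ihq s, ihr s]
  | mul q r _ _ ihq ihr =>
      rw [map_mul, map_mul]
      have h1 : ∀ (q r : Module.End k (MIdx n →₀ V)) (s : MIdx n →₀ V),
          (q * r) s = q (r s) := fun _ _ _ => rfl
      have h2 : ∀ (q r : Module.End k (MIdx n →₀ W)) (t : MIdx n →₀ W),
          (q * r) t = q (r t) := fun _ _ _ => rfl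
      rw [h1, h2, ihq, ihr]

/-- The map `f ⊗ id` on Laurent-polynomial modules, as a `k[z_1,...,z_n]`-linear map. -/
noncomputable def reesMapA (f : V →ₗ[k] W) :
    (MIdx n →₀ V) →ₗ[MvPolynomial (Fin n) k] (MIdx n →₀ W) where
  toFun := Finsupp.mapRange.linearMap f
  map_add' := map_add _
  map_smul' := fun p s => mapRange_poly_smul f p s

lemma reesMapA_apply (f : V →ₗ[k] W) (s : MIdx n →₀ V) (d : MIdx n) :
    reesMapA f s d = f (s d) := rfl

/-- The induced `k[z_1,...,z_n]`-linear map between Rees modules of a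
filtration-preserving linear map. -/
noncomputable def reesHom {F : Fin n → ℤ → Submodule k V} {G : Fin n → ℤ → Submodule k W}
    (f : V →ₗ[k] W) (hF : ∀ i, IsFilt (F i)) (hG : ∀ i, IsFilt (G i))
    (hf : ∀ i p, Submodule.map f (F i p) ≤ G i p) :
    ↥(ReesModule F hF) →ₗ[MvPolynomial (Fin n) k] ↥(ReesModule G hG) :=
  (reesMapA f).restrict (fun s hs d => by
    rw [reesMapA_apply]
    refine Submodule.mem_iInf _ |>.2 fun i => ?_
    exact hf i _ ⟨s d, (Submodule.mem_iInf _).1 (hs d) i, rfl⟩)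


section Aux

variable (n)

/-- Cast a `ℕ`-valued exponent to an integer multi-index. -/
def eZ (a : Fin n →₀ ℕ) : MIdx n := fun i => (a i : ℤ)

variable {n}

lemma eZ_injective : Function.Injective (eZ n) := by
  intro a b h
  ext i
  have h1 : ((a i : ℤ)) = (b i : ℤ) := congrFun h i
  exact_mod_cast h1

/-- Truncate an integer multi-index to a `ℕ`-valued exponent. -/
noncomputable def toNatExp (m : MIdx n) : Fin n →₀ ℕ :=
  Finsupp.equivFunOnFinite.symm fun i => (m i).toNat

lemma eZ_toNatExp {m : MIdx n} (h : ∀ i, 0 ≤ m i) : eZ n (toNatExp m) = m := by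
  funext i
  simp [eZ, toNatExp, Int.toNat_of_nonneg (h i)]

lemma toNatExp_eZ (a : Fin n →₀ ℕ) : toNatExp (eZ n a) = a := by
  ext i
  simp [eZ, toNatExp]

lemma polyActionHom_monomial (a : Fin n →₀ ℕ) (r : k) :
    polyActionHom k V n (MvPolynomial.monomial a r) = r • shiftL (k := k) (eZ n a) := by
  have h : (MvPolynomial.monomial a r : MvPolynomial (Fin n) k)
      = AddMonoidAlgebra.single a r := by
    rw [MvPolynomial.monomial]; rfl
  rw [polyActionHom, h]
  erw [AddMonoidAlgebra.lift_single (shiftMonoidHom (k := k) (n := n) (V := V)) a r]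
  rfl

lemma monomial_smul_apply (a : Fin n →₀ ℕ) (r : k) (s : MIdx n →₀ V) (d : MIdx n) :
    ((MvPolynomial.monomial a r : MvPolynomial (Fin n) k) • s) d = r • s (d - eZ n a) := by
  rw [poly_smul_def, polyActionHom_monomial]
  show r • (shiftL (k := k) (eZ n a) s) d = _
  rw [shiftL_apply]

lemma monomial_smul_single (a : Fin n →₀ ℕ) (r : k) (q : MIdx n) (x : V) :
    (MvPolynomial.monomial a r : MvPolynomial (Fin n) k) • (Finsupp.single q x : MIdx n →₀ V)
      = Finsupp.single (q + eZ n a) (r • x) := by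
  classical
  ext d
  rw [monomial_smul_apply, Finsupp.single_apply, Finsupp.single_apply]
  by_cases h : q + eZ n a = d
  · rw [if_pos h, if_pos (by rw [← h]; abel)]
  · rw [if_neg h, if_neg (by intro hc; exact h (by rw [hc]; abel)), smul_zero]

lemma smul_apply_eq_sum (c : MvPolynomial (Fin n) k) (s : MIdx n →₀ V) (d : MIdx n) :
    (c • s) d = ∑ a ∈ c.support, MvPolynomial.coeff a c • s (d - eZ n a) := by
  classical
  conv_lhs => rw [MvPolynomial.as_sum c]
  rw [Finset.sum_smul, Finsupp.finset_sum_apply]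
  exact Finset.sum_congr rfl fun a _ => monomial_smul_apply a _ s d

open Classical in
lemma smul_single_apply (c : MvPolynomial (Fin n) k) (q : MIdx n) (x : V) (d : MIdx n) :
    (c • (Finsupp.single q x : MIdx n →₀ V)) d
      = (if ∀ i, 0 ≤ d i - q i then MvPolynomial.coeff (toNatExp (d - q)) c else 0) • x := by
  rw [smul_apply_eq_sum]
  by_cases h : ∀ i, 0 ≤ d i - q i
  · rw [if_pos h]
    set a0 := toNatExp (d - q) with ha0
    have hEa0 : eZ n a0 = d - q := eZ_toNatExp h
    have key : ∀ a ∈ c.support,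
        MvPolynomial.coeff a c • (Finsupp.single q x : MIdx n →₀ V) (d - eZ n a)
          = if a = a0 then MvPolynomial.coeff a c • x else 0 := by
      intro a _
      by_cases ha : a = a0
      · subst ha
        rw [if_pos rfl, Finsupp.single_apply, if_pos (by rw [hEa0]; abel)]
      · rw [if_neg ha, Finsupp.single_apply, if_neg, smul_zero]
        intro hc
        apply ha
        have h3 : eZ n a = d - q := by rw [hc]; abel
        rw [ha0, ← h3, toNatExp_eZ]
    rw [Finset.sum_congr rfl key, Finset.sum_ite_eq' c.support a0
      (fun a => MvPolynomial.coeff a c • x)]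
    by_cases hs : a0 ∈ c.support
    · rw [if_pos hs]
    · rw [if_neg hs, MvPolynomial.notMem_support_iff.1 hs, zero_smul]
  · rw [if_neg h, zero_smul]
    apply Finset.sum_eq_zero
    intro a _
    rw [Finsupp.single_apply, if_neg, smul_zero]
    intro hc
    apply h
    intro i
    have h1 := congrFun hc i
    simp only [Pi.sub_apply] at h1
    have h2 : eZ n a i = (a i : ℤ) := rfl
    have hnn : (0 : ℤ) ≤ (a i : ℤ) := Int.natCast_nonneg _
    omega

end Aux


end ToricRees

open ToricRees

/-- For a finite dimensional vector space with `n` descending separated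
exhaustive filtrations admitting a splitting, the Rees module is a free
`k[z_1,...,z_n]`-module of rank `dim_k V`. -/
theorem rees_module_free_of_splittable {k V : Type*} [Field k] [AddCommGroup V] [Module k V]
    [FiniteDimensional k V] {n : ℕ} (F : Fin n → ℤ → Submodule k V)
    (hF : ∀ i, IsFilt (F i)) (hsplit : Splittable F) :
    Module.Free (MvPolynomial (Fin n) k) ↥(ReesModule F hF) ∧
      Module.rank (MvPolynomial (Fin n) k) ↥(ReesModule F hF)
        = (Module.finrank k V : Cardinal) := by
  classical
  obtain ⟨𝒱, hInt, hSup⟩ := hsplit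
  set R := MvPolynomial (Fin n) k with hR
  let bb : ∀ p : MIdx n, Module.Basis (Module.Basis.ofVectorSpaceIndex k ↥(𝒱 p)) k ↥(𝒱 p) :=
    fun p => Module.Basis.ofVectorSpace k ↥(𝒱 p)
  let B := hInt.collectedBasis bb
  have hBcoe : ∀ j : Σ p : MIdx n, Module.Basis.ofVectorSpaceIndex k ↥(𝒱 p),
      B j = (bb j.1 j.2 : V) := fun j => by
    rw [hInt.collectedBasis_coe]
  have hBmem : ∀ j : Σ p : MIdx n, Module.Basis.ofVectorSpaceIndex k ↥(𝒱 p),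
      B j ∈ 𝒱 j.1 := fun j => hInt.collectedBasis_mem bb j
  have h𝒱F : ∀ (p : MIdx n) (i : Fin n) (r : ℤ), r ≤ p i → 𝒱 p ≤ F i r := by
    intro p i r hr
    rw [hSup i r]
    exact le_iSup₂ (f := fun p (_ : p ∈ {p : MIdx n | r ≤ p i}) => 𝒱 p) p hr
  have h𝒱fcap : ∀ {p q : MIdx n}, q ≤ p → 𝒱 p ≤ fcap F q := fun {p q} hqp =>
    le_iInf fun i => h𝒱F p i (q i) (hqp i)
  -- each filtration step is the span of the adapted basis vectors
  have h𝒱span : ∀ p : MIdx n, 𝒱 p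
      = Submodule.span k (Set.range fun x : Module.Basis.ofVectorSpaceIndex k ↥(𝒱 p) =>
          ((bb p x : ↥(𝒱 p)) : V)) := by
    intro p
    have h1 : Submodule.span k (Set.range (bb p)) = (⊤ : Submodule k ↥(𝒱 p)) :=
      Module.Basis.span_eq (bb p)
    have h2 := congrArg (Submodule.map (𝒱 p).subtype) h1
    rw [Submodule.map_span, Submodule.map_top, Submodule.range_subtype] at h2
    have h3 : ((𝒱 p).subtype '' Set.range (bb p))
        = Set.range fun x : Module.Basis.ofVectorSpaceIndex k ↥(𝒱 p) => ((bb p x : ↥(𝒱 p)) : V) := by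
      rw [← Set.range_comp]
      rfl
    rw [h3] at h2
    exact h2.symm
  have hFspan : ∀ (i : Fin n) (r : ℤ),
      F i r = Submodule.span k (B '' {j | r ≤ j.1 i}) := by
    intro i r
    apply le_antisymm
    · rw [hSup i r]
      apply iSup₂_le
      intro p hp
      rw [h𝒱span p]
      apply Submodule.span_le.2
      rintro _ ⟨x, rfl⟩
      apply Submodule.subset_span
      exact ⟨⟨p, x⟩, hp, hBcoe ⟨p, x⟩⟩
    · apply Submodule.span_le.2
      rintro _ ⟨j, hj, rfl⟩
      exact h𝒱F j.1 i r hj (hBmem j)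
  have hmemfcap : ∀ (q : MIdx n) (x : V), x ∈ fcap F q →
      x ∈ Submodule.span k (B '' {j | q ≤ j.1}) := by
    intro q x hx
    rw [B.mem_span_image]
    intro j hj
    intro i
    have h1 : x ∈ Submodule.span k (B '' {j | q i ≤ j.1 i}) := by
      rw [← hFspan i (q i)]
      exact (Submodule.mem_iInf _).1 hx i
    exact (B.mem_span_image.1 h1) hj
  -- the candidate basis family
  let w : (Σ p : MIdx n, Module.Basis.ofVectorSpaceIndex k ↥(𝒱 p)) → (MIdx n →₀ V) :=
    fun j => Finsupp.single (-(j.1)) (B j)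
  have hw_mem : ∀ j, w j ∈ ReesModule F hF := by
    intro j d
    show (Finsupp.single (-(j.1)) (B j)) d ∈ fcap F (-d)
    rw [Finsupp.single_apply]
    by_cases hd : -(j.1) = d
    · rw [if_pos hd]
      have : -d = j.1 := by rw [← hd]; abel
      rw [this]
      exact h𝒱fcap (le_refl j.1) (hBmem j)
    · rw [if_neg hd]
      exact Submodule.zero_mem _
  let v : (Σ p : MIdx n, Module.Basis.ofVectorSpaceIndex k ↥(𝒱 p)) → ↥(ReesModule F hF) :=
    fun j => ⟨w j, hw_mem j⟩
  -- linear independence of the ambient family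
  have hindep : LinearIndependent R w := by
    rw [linearIndependent_iff]
    intro l hl
    refine Finsupp.ext fun j0 => ?_
    rw [Finsupp.coe_zero, Pi.zero_apply]
    by_cases hj0 : j0 ∈ l.support
    on_goal 2 => exact Finsupp.notMem_support_iff.1 hj0
    apply MvPolynomial.ext
    intro a
    rw [MvPolynomial.coeff_zero]
    set d : MIdx n := eZ n a - j0.1 with hd
    have hval : ∑ j ∈ l.support, ((l j • w j : MIdx n →₀ V)) d = 0 := by
      have h0 := congrArg (fun t : MIdx n →₀ V => t d) hl
      simpa [Finsupp.linearCombination_apply, Finsupp.sum_apply, Finsupp.sum] using h0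
    have hsum : ∑ j ∈ l.support,
        (if ∀ i, 0 ≤ d i - (-(j.1)) i then
            MvPolynomial.coeff (toNatExp (d - -(j.1))) (l j) else 0) • B j = 0 := by
      rw [← hval]
      exact Finset.sum_congr rfl fun j _ => (smul_single_apply (l j) (-(j.1)) (B j) d).symm
    have hz := linearIndependent_iff'.1 B.linearIndependent l.support _ hsum j0 hj0
    have hEq : d - -(j0.1) = eZ n a := by
      funext i
      simp only [hd, Pi.sub_apply, Pi.neg_apply]
      ring
    have hcond : ∀ i, 0 ≤ d i - (-(j0.1)) i := by
      intro i
      have h4 : d i - (-(j0.1)) i = eZ n a i := by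
        have := congrFun hEq i
        simpa using this
      rw [h4]
      exact Int.natCast_nonneg _
    rw [if_pos hcond, hEq, toNatExp_eZ] at hz
    exact hz
  have hvw : (ReesModule F hF).subtype ∘ v = w := rfl
  have hindep' : LinearIndependent R v :=
    LinearIndependent.of_comp (ReesModule F hF).subtype (hvw ▸ hindep)
  -- spanning
  have hambient : ∀ s ∈ ReesModule F hF, s ∈ Submodule.span R (Set.range w) := by
    intro s hs
    have hrepr : (s.sum fun d x => Finsupp.single d x) = s := Finsupp.sum_single s
    rw [← hrepr, Finsupp.sum]
    apply Submodule.sum_mem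
    intro d _
    have hx : s d ∈ Submodule.span k (B '' {j | -d ≤ j.1}) := hmemfcap (-d) (s d) (hs d)
    have hsingle : ∀ j : Σ p : MIdx n, Module.Basis.ofVectorSpaceIndex k ↥(𝒱 p), -d ≤ j.1 →
        (Finsupp.single d (B j) : MIdx n →₀ V) ∈ Submodule.span R (Set.range w) := by
      intro j hj
      have heq : (Finsupp.single d (B j) : MIdx n →₀ V)
          = (MvPolynomial.monomial (toNatExp (d + j.1)) (1 : k) : R) • w j := by
        show _ = (MvPolynomial.monomial (toNatExp (d + j.1)) (1 : k) : R) •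
          (Finsupp.single (-(j.1)) (B j) : MIdx n →₀ V)
        rw [monomial_smul_single, one_smul, eZ_toNatExp (fun i => by
          have := hj i
          simp only [Pi.add_apply, Pi.neg_apply] at this ⊢
          omega)]
        congr 1
        funext i
        simp
      rw [heq]
      exact Submodule.smul_mem _ _ (Submodule.subset_span ⟨j, rfl⟩)
    have hmap : (Finsupp.single d (s d) : MIdx n →₀ V)
        ∈ Submodule.span k (⇑(Finsupp.lsingle (R := k) d) '' (B '' {j | -d ≤ j.1})) := by
      rw [← Submodule.map_span]
      exact Submodule.mem_map_of_mem hx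
    have hk : Submodule.span k (⇑(Finsupp.lsingle (R := k) d) '' (B '' {j | -d ≤ j.1}))
        ≤ (Submodule.span R (Set.range w)).restrictScalars k := by
      rw [Submodule.span_le]
      rintro _ ⟨_, ⟨j, hj, rfl⟩, rfl⟩
      exact hsingle j hj
    exact hk hmap
  have hspan : ⊤ ≤ Submodule.span R (Set.range v) := by
    rintro ⟨s, hs⟩ -
    have h1 : s ∈ Submodule.map (ReesModule F hF).subtype (Submodule.span R (Set.range v)) := by
      rw [Submodule.map_span, ← Set.range_comp, hvw]
      exact hambient s hs
    obtain ⟨y, hy, hys⟩ := h1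
    have : (⟨s, hs⟩ : ↥(ReesModule F hF)) = y := Subtype.ext hys.symm
    rw [this]
    exact hy
  let bas : Module.Basis (Σ p : MIdx n, Module.Basis.ofVectorSpaceIndex k ↥(𝒱 p)) R ↥(ReesModule F hF) :=
    Module.Basis.mk hindep' hspan
  refine ⟨Module.Free.of_basis bas, ?_⟩
  rw [← bas.mk_eq_rank'', B.mk_eq_rank'', Module.finrank_eq_rank]
end

section
/- Let V be a finite dimensional k-vector space with n descending separated exhaustive filtrations F_1,...,F_n. For p ∈ ℤ^n set F^p = ∩_i F_i^{p_i} and D^p = F^p / (Σ_{i=1}^n F^{p + e_i}), where e_i is the i-th standard basis vector. If Σ_{p∈ℤ^n} dim_k D^p = dim_k V, then the filtrations admit a splitting, i.e. there exists a decomposition V = ⊕_{p∈ℤ^n} V^p with F_i^r V = ⊕_{p: p_i ≥ r} V^p for all i and r. -/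
open ToricRees


section AuxDim
open Module

lemma finrank_finsetSup_le {k V ι : Type*} [Field k] [AddCommGroup V] [Module k V]
    [FiniteDimensional k V] (W : ι → Submodule k V) (T : Finset ι) :
    finrank k ↥(T.sup W) ≤ ∑ p ∈ T, finrank k ↥(W p) := by
  classical
  induction T using Finset.induction_on with
  | empty => simp
  | insert a s ha ih =>
      rw [Finset.sup_insert, Finset.sum_insert ha]
      have h2 := Submodule.finrank_sup_add_finrank_inf_eq (W a) (s.sup W)
      omega

lemma disjoint_of_finrank_sum {k V ι : Type*} [DecidableEq ι] [Field k] [AddCommGroup V] [Module k V]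
    [FiniteDimensional k V] (W : ι → Submodule k V) (T : Finset ι)
    (hsum : ∑ p ∈ T, finrank k ↥(W p) ≤ finrank k ↥(T.sup W))
    {a : ι} (ha : a ∈ T) : Disjoint (W a) ((T.erase a).sup W) := by
  classical
  have h1 := finrank_finsetSup_le W (T.erase a)
  have h2 := Submodule.finrank_sup_add_finrank_inf_eq (W a) ((T.erase a).sup W)
  have h3 : T.sup W = W a ⊔ (T.erase a).sup W := by
    conv_lhs => rw [← Finset.insert_erase ha]
    rw [Finset.sup_insert]
  have h4 : ∑ p ∈ T, finrank k ↥(W p)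
      = finrank k ↥(W a) + ∑ p ∈ T.erase a, finrank k ↥(W p) :=
    (Finset.add_sum_erase _ _ ha).symm
  rw [h3, h4] at hsum
  have h5 : finrank k ↥(W a ⊓ (T.erase a).sup W) = 0 := by omega
  rw [disjoint_iff]
  exact Submodule.finrank_eq_zero.mp h5

end AuxDim

/-- If `Σ_p dim D^p = dim V`, the filtrations admit a splitting. -/
theorem splittable_of_dim_sum {k V : Type*} [Field k] [AddCommGroup V] [Module k V]
    [FiniteDimensional k V] {n : ℕ} (F : Fin n → ℤ → Submodule k V)
    (hF : ∀ i, IsFilt (F i))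
    (h : ∑ᶠ p : MIdx n, Module.finrank k (Dmod F p) = Module.finrank k V) :
    Splittable F := by
  classical
  choose S hS using fun i => (hF i).sep
  choose E hE using fun i => (hF i).exh
  choose C hC using fun p : MIdx n => Submodule.exists_isCompl
    (Submodule.comap (fcap F p).subtype (⨆ i : Fin n, fcap F (p + Pi.single i 1)))
  set 𝒱 : MIdx n → Submodule k V := fun p => (C p).map (fcap F p).subtype with h𝒱
  -- basic monotonicity facts
  have fcap_mono : ∀ {p q : MIdx n}, p ≤ q → fcap F q ≤ fcap F p := by
    intro p q hpq
    exact le_iInf fun i => (iInf_le _ i).trans ((hF i).mono (hpq i))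
  have hsingle : ∀ (p : MIdx n) (i : Fin n), p ≤ p + Pi.single i 1 := by
    intro p i j
    simp only [Pi.add_apply, Pi.single_apply]
    split <;> omega
  have happ : ∀ (p : MIdx n) (i : Fin n), ((p + Pi.single i 1 : MIdx n) i) = p i + 1 := by
    intro p i; simp
  have hsuple : ∀ p : MIdx n, (⨆ i : Fin n, fcap F (p + Pi.single i 1)) ≤ fcap F p :=
    fun p => iSup_le fun i => fcap_mono (hsingle p i)
  have hVle : ∀ p, 𝒱 p ≤ fcap F p := fun p => Submodule.map_subtype_le _ _
  -- the decomposition F^p = V^p + sum of F^{p+e_i}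
  have hdecomp : ∀ p, fcap F p = 𝒱 p ⊔ ⨆ i : Fin n, fcap F (p + Pi.single i 1) := by
    intro p
    have h1 := congrArg (Submodule.map (fcap F p).subtype) (hC p).codisjoint.eq_top
    rw [Submodule.map_sup, Submodule.map_comap_subtype, Submodule.map_subtype_top,
      inf_eq_right.mpr (hsuple p)] at h1
    rw [← h1, sup_comm]
  -- key induction: F^q ≤ sup of V^p over p ≥ q
  have key : ∀ (m : ℕ) (q : MIdx n), (∑ i : Fin n, (S i + 1 - q i).toNat) ≤ m →
      fcap F q ≤ ⨆ p : MIdx n, ⨆ _ : q ≤ p, 𝒱 p := by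
    intro m
    induction m using Nat.strong_induction_on with
    | _ m ih =>
    intro q hq
    rw [hdecomp q]
    apply sup_le
    · exact le_iSup_of_le q (le_iSup_of_le le_rfl le_rfl)
    · apply iSup_le; intro i
      by_cases hcase : S i ≤ q i
      · have hb : fcap F (q + Pi.single i 1) ≤ F i (q i + 1) := by
          have h0 := iInf_le (fun j => F j ((q + Pi.single i 1 : MIdx n) j)) i
          rw [happ q i] at h0
          exact h0
        rw [hS i (q i + 1) (by omega)] at hb
        exact le_bot_iff.mp hb ▸ bot_le
      · push_neg at hcase
        have hμ : (∑ j : Fin n, (S j + 1 - (q + Pi.single i 1 : MIdx n) j).toNat)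
            < ∑ j : Fin n, (S j + 1 - q j).toNat := by
          refine Finset.sum_lt_sum (fun j _ => ?_) ⟨i, Finset.mem_univ i, ?_⟩
          · simp only [Pi.add_apply, Pi.single_apply]
            split <;> omega
          · rw [happ q i]
            omega
        refine (ih _ (lt_of_lt_of_le hμ hq) _ le_rfl).trans ?_
        apply iSup_le; intro p; apply iSup_le; intro hp
        exact le_iSup_of_le p (le_iSup_of_le ((hsingle q i).trans hp) le_rfl)
  -- the box
  set T : Finset (MIdx n) := Fintype.piFinset fun i => Finset.Icc (E i) (S i) with hT
  have hVbot : ∀ p : MIdx n, p ∉ T → 𝒱 p = ⊥ := by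
    intro p hp
    rw [hT, Fintype.mem_piFinset] at hp
    push_neg at hp
    obtain ⟨i, hi⟩ := hp
    rw [Finset.mem_Icc] at hi
    push_neg at hi
    by_cases hlow : p i < E i
    · -- K p = ⊤, so C p = ⊥
      have hup : fcap F p ≤ fcap F (p + Pi.single i 1) := by
        refine le_iInf fun j => ?_
        by_cases hj : j = i
        · subst hj
          rw [happ p j, hE j (p j + 1) (by omega)]
          exact le_top
        · have : ((p + Pi.single i 1 : MIdx n) j) = p j := by
            simp [Pi.single_apply, hj]
          rw [this]
          exact iInf_le _ j
      have hKtop : Submodule.comap (fcap F p).subtype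
          (⨆ i : Fin n, fcap F (p + Pi.single i 1)) = ⊤ :=
        Submodule.comap_subtype_eq_top.mpr (hup.trans (le_iSup_of_le i le_rfl))
      have hCbot : C p = ⊥ := by
        have hd := (hC p).disjoint
        rw [hKtop] at hd
        exact hd.symm.eq_bot_of_le le_top
      rw [h𝒱]
      simp only [hCbot, Submodule.map_bot]
    · have hhigh : S i ≤ p i := le_of_lt (hi (by omega))
      have : fcap F p = ⊥ :=
        le_bot_iff.mp ((iInf_le (fun j => F j (p j)) i).trans_eq (hS i (p i) hhigh))
      exact le_bot_iff.mp ((hVle p).trans this.le)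
  -- finrank of Dmod equals finrank of V^p
  have hrank : ∀ p, Module.finrank k (Dmod F p) = Module.finrank k ↥(𝒱 p) := by
    intro p
    have e1 : Dmod F p ≃ₗ[k] ↥(C p) := by
      unfold Dmod
      exact Submodule.quotientEquivOfIsCompl _ _ (hC p)
    have e2 : ↥(C p) ≃ₗ[k] ↥(𝒱 p) :=
      Submodule.equivMapOfInjective _ (Submodule.injective_subtype _) (C p)
    rw [e1.finrank_eq, e2.finrank_eq]
  -- total dimension
  have hsum : ∑ p ∈ T, Module.finrank k ↥(𝒱 p) = Module.finrank k V := by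
    rw [← h]
    have hsupp : (Function.support fun p : MIdx n => Module.finrank k (Dmod F p)) ⊆ ↑T := by
      intro p hp
      by_contra hpT
      apply hp
      show Module.finrank k (Dmod F p) = 0
      rw [hrank p, hVbot p (fun hh => hpT (Finset.mem_coe.mpr hh))]
      exact finrank_bot k V
    rw [finsum_eq_sum_of_support_subset _ hsupp]
    exact Finset.sum_congr rfl fun p _ => (hrank p).symm
  -- the box spans
  have htop : T.sup 𝒱 = ⊤ := by
    refine le_antisymm le_top ?_
    have h0 : (⊤ : Submodule k V) ≤ fcap F E := le_iInf fun i => (hE i (E i) le_rfl).ge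
    refine h0.trans ((key _ E le_rfl).trans ?_)
    apply iSup_le; intro p; apply iSup_le; intro hp
    by_cases hpT : p ∈ T
    · exact Finset.le_sup hpT
    · rw [hVbot p hpT]; exact bot_le
  -- independence
  have hrksup : ∑ p ∈ T, Module.finrank k ↥(𝒱 p) ≤ Module.finrank k ↥(T.sup 𝒱) := by
    rw [htop, hsum, finrank_top]
  have hindep : iSupIndep 𝒱 := by
    intro p
    by_cases hp : p ∈ T
    · have hd := disjoint_of_finrank_sum 𝒱 T hrksup hp
      refine hd.mono_right ?_
      apply iSup_le; intro q; apply iSup_le; intro hq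
      by_cases hqT : q ∈ T
      · exact Finset.le_sup (Finset.mem_erase.mpr ⟨hq, hqT⟩)
      · rw [hVbot q hqT]; exact bot_le
    · rw [hVbot p hp]; exact disjoint_bot_left
  have hint : DirectSum.IsInternal 𝒱 :=
    DirectSum.isInternal_submodule_of_iSupIndep_of_iSup_eq_top hindep
      (le_antisymm le_top (htop.ge.trans (Finset.sup_le fun p _ => le_iSup 𝒱 p)))
  refine ⟨𝒱, hint, fun i r => ?_⟩
  apply le_antisymm
  · set q : MIdx n := Function.update E i r with hqdef
    have h1 : F i r ≤ fcap F q := by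
      refine le_iInf fun j => ?_
      by_cases hj : j = i
      · subst hj
        rw [hqdef, Function.update_self]
      · rw [hqdef, Function.update_of_ne hj, hE j (E j) le_rfl]
        exact le_top
    refine h1.trans ((key _ q le_rfl).trans ?_)
    apply iSup_le; intro p; apply iSup_le; intro hp
    refine le_iSup_of_le p (le_iSup_of_le ?_ le_rfl)
    have := hp i
    rw [hqdef, Function.update_self] at this
    exact this
  · apply iSup_le; intro p; apply iSup_le; intro hp
    exact (hVle p).trans ((iInf_le _ i).trans ((hF i).mono hp))
end

section
/- Let V be a finite dimensional k-vector space with two descending, separated, exhaustive filtrations F and G. Then F and G admit a simultaneous splitting: there exists a bigrading V = ⊕_{(p,q)∈ℤ²} V^{p,q} such that F^r = ⊕_{p ≥ r} V^{p,q} and G^s = ⊕_{q ≥ s} V^{p,q}. -/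
open ToricRees

section SplitAux

variable {k : Type*} [Field k]

private lemma disj_aux {V : Type*} [AddCommGroup V] [Module k V]
    {L W X Y : Submodule k V} (hX : X ≤ W) (hY : Y ≤ W)
    (hXY : Disjoint X Y) (hLW : Disjoint L W) : Disjoint (X ⊔ L) Y := by
  rw [Submodule.disjoint_def]
  intro x hx hxY
  rcases Submodule.mem_sup.1 hx with ⟨a, ha, l, hl, rfl⟩
  have hlW : l ∈ W := by
    have : l = (a + l) - a := by abel
    rw [this]
    exact Submodule.sub_mem _ (hY hxY) (hX ha)
  have hl0 : l = 0 := (Submodule.disjoint_def.1 hLW) l hl hlW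
  subst hl0
  rw [add_zero] at hxY ⊢
  exact (Submodule.disjoint_def.1 hXY) a ha hxY

private lemma split_line {V : Type*} [AddCommGroup V] [Module k V]
    (φ : V →ₗ[k] k) (v : V) (hv : φ v = 1) (U : Submodule k V) (hvU : v ∈ U) :
    U = Submodule.span k {v} ⊔ (U ⊓ LinearMap.ker φ) := by
  apply le_antisymm
  · intro x hx
    have h1 : x = φ x • v + (x - φ x • v) := by abel
    rw [h1]
    refine Submodule.add_mem _ (Submodule.mem_sup_left ?_) (Submodule.mem_sup_right ?_)
    · exact Submodule.smul_mem _ _ (Submodule.mem_span_singleton_self v)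
    · refine ⟨Submodule.sub_mem _ hx (Submodule.smul_mem _ _ hvU), ?_⟩
      simp [LinearMap.mem_ker, hv, mul_comm]
  · refine sup_le ?_ inf_le_left
    rw [Submodule.span_le, Set.singleton_subset_iff]
    exact hvU

private lemma biSup_sup_split {V : Type*} [AddCommGroup V] [Module k V]
    (S : Set (ℤ × ℤ)) (A B : ℤ × ℤ → Submodule k V) :
    ⨆ pq ∈ S, (A pq ⊔ B pq) = (⨆ pq ∈ S, A pq) ⊔ (⨆ pq ∈ S, B pq) := by
  simp only [← iSup_sup_eq]

private lemma biSup_ite_of_mem {V : Type*} [AddCommGroup V] [Module k V]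
    {S : Set (ℤ × ℤ)} {c : ℤ × ℤ} (hc : c ∈ S) (L : Submodule k V) :
    ⨆ pq ∈ S, (if pq = c then L else ⊥) = L := by
  apply le_antisymm
  · refine iSup₂_le fun pq _ => ?_
    split
    · exact le_rfl
    · exact bot_le
  · have := le_iSup₂ (f := fun pq (_ : pq ∈ S) => if pq = c then L else (⊥ : Submodule k V)) c hc
    simpa using this

private lemma biSup_ite_of_not_mem {V : Type*} [AddCommGroup V] [Module k V]
    {S : Set (ℤ × ℤ)} {c : ℤ × ℤ} (hc : c ∉ S) (L : Submodule k V) :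
    ⨆ pq ∈ S, (if pq = c then L else ⊥) = ⊥ := by
  refine le_antisymm (iSup₂_le fun pq hpq => ?_) bot_le
  split
  · next h => exact absurd (h ▸ hpq) hc
  · exact le_rfl

private lemma split_trivial {V : Type*} [AddCommGroup V] [Module k V]
    (hs : Subsingleton V) (F G : ℤ → Submodule k V) :
    ∃ 𝒱 : ℤ × ℤ → Submodule k V, DirectSum.IsInternal 𝒱 ∧
      (∀ r : ℤ, F r = ⨆ pq ∈ {pq : ℤ × ℤ | r ≤ pq.1}, 𝒱 pq) ∧
      (∀ s : ℤ, G s = ⨆ pq ∈ {pq : ℤ × ℤ | s ≤ pq.2}, 𝒱 pq) := by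
  have hbot : ∀ U : Submodule k V, U = ⊥ := fun U => by
    rw [eq_bot_iff]; intro x _; simpa using (Subsingleton.elim x 0)
  have hss : Subsingleton (Submodule k V) := ⟨fun a b => (hbot a).trans (hbot b).symm⟩
  refine ⟨fun _ => ⊥, ?_, fun r => ?_, fun s => ?_⟩
  · refine DirectSum.isInternal_submodule_of_iSupIndep_of_iSup_eq_top ?_ ?_
    · intro pq; simp
    · exact Subsingleton.elim _ _
  · exact Subsingleton.elim _ _
  · exact Subsingleton.elim _ _

private theorem split_aux (k : Type*) [Field k] :
    ∀ (N : ℕ) (V : Type _) [AddCommGroup V] [Module k V] [FiniteDimensional k V]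
      (F G : ℤ → Submodule k V), Module.finrank k V ≤ N →
      ToricRees.IsFilt F → ToricRees.IsFilt G →
      ∃ 𝒱 : ℤ × ℤ → Submodule k V, DirectSum.IsInternal 𝒱 ∧
        (∀ r : ℤ, F r = ⨆ pq ∈ {pq : ℤ × ℤ | r ≤ pq.1}, 𝒱 pq) ∧
        (∀ s : ℤ, G s = ⨆ pq ∈ {pq : ℤ × ℤ | s ≤ pq.2}, 𝒱 pq) := by
  intro N
  induction N with
  | zero =>
      intro V _ _ _ F G hrank hF hG
      exact split_trivial (by rw [← Module.finrank_zero_iff (R := k)]; omega) F G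
  | succ N IH =>
      intro V _ _ _ F G hrank hF hG
      rcases Nat.eq_zero_or_pos (Module.finrank k V) with h0 | hpos
      · exact split_trivial (by rw [← Module.finrank_zero_iff (R := k)]; omega) F G
      haveI hnt : Nontrivial V := Module.nontrivial_of_finrank_pos hpos
      -- p0 : largest p with F p ≠ ⊥
      have hbddF : ∃ b : ℤ, ∀ z : ℤ, F z ≠ ⊥ → z ≤ b := by
        obtain ⟨P, hP⟩ := hF.sep
        exact ⟨P, fun z hz => by by_contra h; exact hz (hP z (by omega))⟩
      have hinhF : ∃ z : ℤ, F z ≠ ⊥ := by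
        obtain ⟨P, hP⟩ := hF.exh
        refine ⟨P, ?_⟩
        rw [hP P le_rfl]
        exact top_ne_bot
      obtain ⟨p0, hFp0, hp0max⟩ := Int.exists_greatest_of_bdd hbddF hinhF
      have hFbot : ∀ r : ℤ, p0 < r → F r = ⊥ := fun r hr => by
        by_contra h; have := hp0max r h; omega
      -- q0 : largest q with F p0 ⊓ G q ≠ ⊥
      have hbddG : ∃ b : ℤ, ∀ z : ℤ, F p0 ⊓ G z ≠ ⊥ → z ≤ b := by
        obtain ⟨P, hP⟩ := hG.sep
        refine ⟨P, fun z hz => ?_⟩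
        by_contra h
        rw [hP z (by omega), inf_bot_eq] at hz
        exact hz rfl
      have hinhG : ∃ z : ℤ, F p0 ⊓ G z ≠ ⊥ := by
        obtain ⟨P, hP⟩ := hG.exh
        refine ⟨P, ?_⟩
        rw [hP P le_rfl, inf_top_eq]
        exact hFp0
      obtain ⟨q0, hq0ne, hq0max⟩ := Int.exists_greatest_of_bdd hbddG hinhG
      obtain ⟨v, hvmem, hv0⟩ := Submodule.exists_mem_ne_zero_of_ne_bot hq0ne
      have hvF : v ∈ F p0 := hvmem.1
      have hvG : v ∈ G q0 := hvmem.2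
      have hvnot : v ∉ G (q0 + 1) := by
        intro h
        have hne : F p0 ⊓ G (q0 + 1) ≠ ⊥ :=
          Submodule.ne_bot_iff _ |>.2 ⟨v, ⟨hvF, h⟩, hv0⟩
        have := hq0max _ hne; omega
      -- the functional φ
      have hvQ : (G (q0 + 1)).mkQ v ≠ 0 := by
        rw [Submodule.mkQ_apply, Ne, Submodule.Quotient.mk_eq_zero]
        exact hvnot
      obtain ⟨ψ, hψ⟩ : ∃ ψ : Module.Dual k (V ⧸ G (q0 + 1)), ψ ((G (q0 + 1)).mkQ v) ≠ 0 := by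
        by_contra h
        push_neg at h
        exact hvQ ((Module.forall_dual_apply_eq_zero_iff k _).1 h)
      set φ : V →ₗ[k] k := (ψ ((G (q0 + 1)).mkQ v))⁻¹ • (ψ.comp (G (q0 + 1)).mkQ) with hφdef
      have hφv : φ v = 1 := by
        simp only [hφdef, LinearMap.smul_apply, LinearMap.comp_apply, smul_eq_mul]
        exact inv_mul_cancel₀ hψ
      have hGker : G (q0 + 1) ≤ LinearMap.ker φ := by
        intro x hx
        simp only [LinearMap.mem_ker, hφdef, LinearMap.smul_apply, LinearMap.comp_apply,
          Submodule.mkQ_apply, (Submodule.Quotient.mk_eq_zero _).2 hx, map_zero, smul_zero]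
      set L : Submodule k V := Submodule.span k {v} with hLdef
      set W : Submodule k V := LinearMap.ker φ with hWdef
      have hLW : Disjoint L W := by
        rw [Submodule.disjoint_def]
        intro x hx hxW
        rcases Submodule.mem_span_singleton.1 hx with ⟨a, rfl⟩
        have ha : φ (a • v) = a := by rw [map_smul, hφv, smul_eq_mul, mul_one]
        have : a = 0 := by rw [← ha]; exact hxW
        rw [this, zero_smul]
      have hLWtop : L ⊔ W = ⊤ := by
        rw [eq_top_iff]
        intro x _
        have hx : x = φ x • v + (x - φ x • v) := by abel
        rw [hx]
        refine Submodule.add_mem _ (Submodule.mem_sup_left ?_) (Submodule.mem_sup_right ?_)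
        · exact Submodule.smul_mem _ _ (Submodule.mem_span_singleton_self v)
        · rw [hWdef, LinearMap.mem_ker, map_sub, map_smul, hφv, smul_eq_mul, mul_one, sub_self]
      -- rank of W
      have hrankW : Module.finrank k ↥W ≤ N := by
        rw [hWdef]
        have h1 := LinearMap.finrank_range_add_finrank_ker φ
        have hsurj : Function.Surjective φ := fun a =>
          ⟨a • v, by rw [map_smul, hφv, smul_eq_mul, mul_one]⟩
        rw [LinearMap.range_eq_top.2 hsurj, finrank_top, Module.finrank_self] at h1
        omega
      -- induced filtrations on W
      set F' : ℤ → Submodule k ↥W := fun r => (F r).comap W.subtype with hF'def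
      set G' : ℤ → Submodule k ↥W := fun r => (G r).comap W.subtype with hG'def
      have hF' : ToricRees.IsFilt F' := by
        refine ⟨fun p q h => Submodule.comap_mono (hF.mono h), ?_, ?_⟩
        · obtain ⟨P, hP⟩ := hF.sep
          exact ⟨P, fun p hp => by
            rw [hF'def]; simp only [hP p hp, Submodule.comap_bot, Submodule.ker_subtype]⟩
        · obtain ⟨P, hP⟩ := hF.exh
          exact ⟨P, fun p hp => by
            rw [hF'def]; simp only [hP p hp, Submodule.comap_top]⟩
      have hG' : ToricRees.IsFilt G' := by
        refine ⟨fun p q h => Submodule.comap_mono (hG.mono h), ?_, ?_⟩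
        · obtain ⟨P, hP⟩ := hG.sep
          exact ⟨P, fun p hp => by
            rw [hG'def]; simp only [hP p hp, Submodule.comap_bot, Submodule.ker_subtype]⟩
        · obtain ⟨P, hP⟩ := hG.exh
          exact ⟨P, fun p hp => by
            rw [hG'def]; simp only [hP p hp, Submodule.comap_top]⟩
      obtain ⟨𝒱', hint', hF'eq, hG'eq⟩ := IH ↥W F' G' hrankW hF' hG'
      set c0 : ℤ × ℤ := (p0, q0) with hc0def
      set 𝒱 : ℤ × ℤ → Submodule k V :=
        fun pq => (𝒱' pq).map W.subtype ⊔ (if pq = c0 then L else ⊥) with h𝒱def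
      have key : ∀ S : Set (ℤ × ℤ), (⨆ pq ∈ S, 𝒱 pq)
          = ((⨆ pq ∈ S, 𝒱' pq)).map W.subtype ⊔ (⨆ pq ∈ S, if pq = c0 then L else ⊥) := by
        intro S
        rw [h𝒱def, biSup_sup_split]
        congr 1
        simp only [Submodule.map_iSup]
      -- splitting of the filtrations
      have hFsp : ∀ r : ℤ, r ≤ p0 → F r = L ⊔ (F r ⊓ W) := fun r hr =>
        split_line φ v hφv (F r) (hF.mono hr hvF)
      have hGsp : ∀ s : ℤ, s ≤ q0 → G s = L ⊔ (G s ⊓ W) := fun s hs =>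
        split_line φ v hφv (G s) (hG.mono hs hvG)
      have hGsub : ∀ s : ℤ, q0 < s → G s ≤ W := fun s hs =>
        le_trans (hG.mono (by omega : q0 + 1 ≤ s)) hGker
      refine ⟨𝒱, ?_, fun r => ?_, fun s => ?_⟩
      · -- internality
        refine DirectSum.isInternal_submodule_of_iSupIndep_of_iSup_eq_top ?_ ?_
        · intro pq
          have hSrw : (⨆ j, ⨆ (_ : j ≠ pq), 𝒱 j) = ⨆ j ∈ {j : ℤ × ℤ | j ≠ pq}, 𝒱 j := rfl
          rw [hSrw, key]
          have hX : (𝒱' pq).map W.subtype ≤ W := Submodule.map_subtype_le _ _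
          have hY : ((⨆ j ∈ {j : ℤ × ℤ | j ≠ pq}, 𝒱' j)).map W.subtype ≤ W :=
            Submodule.map_subtype_le _ _
          have hXY : Disjoint ((𝒱' pq).map W.subtype)
              (((⨆ j ∈ {j : ℤ × ℤ | j ≠ pq}, 𝒱' j)).map W.subtype) := by
            rw [disjoint_iff, ← Submodule.map_inf _ (Submodule.injective_subtype W)]
            have hd : Disjoint (𝒱' pq) (⨆ j ∈ {j : ℤ × ℤ | j ≠ pq}, 𝒱' j) :=
              hint'.submodule_iSupIndep pq
            rw [disjoint_iff.1 hd, Submodule.map_bot]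
          by_cases hc : pq = c0
          · have hnot : c0 ∉ {j : ℤ × ℤ | j ≠ pq} := by simp [hc]
            rw [biSup_ite_of_not_mem hnot, sup_bot_eq, h𝒱def]
            simp only [if_pos hc]
            exact disj_aux hX hY hXY hLW
          · have hmem : c0 ∈ {j : ℤ × ℤ | j ≠ pq} := fun h => hc h.symm
            rw [biSup_ite_of_mem hmem, h𝒱def]
            simp only [if_neg hc, sup_bot_eq]
            exact (disj_aux hY hX hXY.symm hLW).symm
        · have h1 : (⨆ pq, 𝒱 pq) = ⨆ pq ∈ (Set.univ : Set (ℤ × ℤ)), 𝒱 pq := by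
            simp
          rw [h1, key, biSup_ite_of_mem (Set.mem_univ c0)]
          have h2 : (⨆ pq ∈ (Set.univ : Set (ℤ × ℤ)), 𝒱' pq) = ⊤ := by
            simpa using hint'.submodule_iSup_eq_top
          rw [h2, Submodule.map_subtype_top, sup_comm]
          exact hLWtop
      · -- formula for F
        rw [key, ← hF'eq r, hF'def, Submodule.map_comap_subtype]
        by_cases hr : r ≤ p0
        · have hmem : c0 ∈ {pq : ℤ × ℤ | r ≤ pq.1} := hr
          rw [biSup_ite_of_mem hmem, sup_comm, inf_comm]
          exact hFsp r hr
        · have hnot : c0 ∉ {pq : ℤ × ℤ | r ≤ pq.1} := hr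
          rw [biSup_ite_of_not_mem hnot, sup_bot_eq, hFbot r (by omega), inf_bot_eq]
      · -- formula for G
        rw [key, ← hG'eq s, hG'def, Submodule.map_comap_subtype]
        by_cases hs : s ≤ q0
        · have hmem : c0 ∈ {pq : ℤ × ℤ | s ≤ pq.2} := hs
          rw [biSup_ite_of_mem hmem, sup_comm, inf_comm]
          exact hGsp s hs
        · have hnot : c0 ∉ {pq : ℤ × ℤ | s ≤ pq.2} := hs
          rw [biSup_ite_of_not_mem hnot, sup_bot_eq,
            inf_eq_right.2 (hGsub s (by omega))]

end SplitAux


/-- Two descending separated exhaustive filtrations on a finite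
dimensional space admit a simultaneous splitting. -/
theorem two_filtrations_splittable {k V : Type*} [Field k] [AddCommGroup V] [Module k V]
    [FiniteDimensional k V] (F G : ℤ → Submodule k V) (hF : IsFilt F) (hG : IsFilt G) :
    ∃ 𝒱 : ℤ × ℤ → Submodule k V, DirectSum.IsInternal 𝒱 ∧
      (∀ r : ℤ, F r = ⨆ pq ∈ {pq : ℤ × ℤ | r ≤ pq.1}, 𝒱 pq) ∧
      (∀ s : ℤ, G s = ⨆ pq ∈ {pq : ℤ × ℤ | s ≤ pq.2}, 𝒱 pq) := by
  exact split_aux k (Module.finrank k V) V F G le_rfl hF hG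
end

section
/- Let f: (V,F) → (W,G) be a filtration-preserving map of finite dimensional k-vector spaces each with one descending separated exhaustive filtration. Then f is strict (i.e. f(F^p) = G^p ∩ im f for all p) if and only if the cokernel of the induced map of Rees modules Rees(f): Rees(V) → Rees(W) over k[z] is torsion-free as a k[z]-module. -/
open ToricRees

section MyHelpers

open ToricRees

variable {k : Type*} [Field k] {U : Type*} [AddCommGroup U] [Module k U]

lemma my_smul_apply' {n : ℕ} (a : MvPolynomial (Fin n) k) (s : MIdx n →₀ U) (d : MIdx n) :
    (a • s) d = (AddMonoidAlgebra.coeff a).sum fun m c => c • s (d - fun j => ((m j : ℤ))) := by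
  rw [poly_smul_def, polyActionHom]
  erw [AddMonoidAlgebra.lift_apply]
  rw [Finsupp.sum, Finsupp.sum, LinearMap.coe_sum, Finset.sum_apply,
    Finsupp.finset_sum_apply]
  refine Finset.sum_congr rfl fun m _ => ?_
  rw [LinearMap.smul_apply, Finsupp.smul_apply]
  congr 1
  rw [shiftMonoidHom]
  show shiftL _ s d = _
  rw [shiftL_apply]
  simp

lemma my_monomial_smul_apply {n : ℕ} (m : Fin n →₀ ℕ) (c : k) (s : MIdx n →₀ U) (d : MIdx n) :
    ((MvPolynomial.monomial m c : MvPolynomial (Fin n) k) • s) d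
      = c • s (d - fun j => ((m j : ℤ))) := by
  rw [my_smul_apply']
  have h : AddMonoidAlgebra.coeff (MvPolynomial.monomial m c : MvPolynomial (Fin n) k) = Finsupp.single m c := by
    rfl
  rw [h, Finsupp.sum_single_index]
  rw [zero_smul]

lemma my_torsionFree (a : MvPolynomial (Fin 1) k) (s : MIdx 1 →₀ U)
    (ha : a ≠ 0) (h : a • s = 0) : s = 0 := by
  by_contra hs
  have hA : a.support.Nonempty := Finsupp.support_nonempty_iff.2 (mt AddMonoidAlgebra.coeff_eq_zero.1 ha)
  have hS : s.support.Nonempty := Finsupp.support_nonempty_iff.2 hs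
  obtain ⟨M, hM, hMmax⟩ := Finset.exists_max_image a.support (fun m => m 0) hA
  obtain ⟨D, hD, hDmax⟩ := Finset.exists_max_image s.support (fun d => d 0) hS
  set dstar : MIdx 1 := fun _ => D 0 + (M 0 : ℤ) with hdstar
  have h0 : (a • s) dstar = 0 := by rw [h]; rfl
  rw [my_smul_apply', Finsupp.sum] at h0
  rw [Finset.sum_eq_single M] at h0
  · have h1 : (dstar - fun j => ((M j : ℤ))) = D := by
      funext j
      rw [Subsingleton.elim j 0]
      simp [hdstar]
    rw [h1] at h0
    exact smul_ne_zero (Finsupp.mem_support_iff.1 hM) (Finsupp.mem_support_iff.1 hD) h0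
  · intro m hm hmM
    have hle : m 0 ≤ M 0 := hMmax m hm
    have hzero : s (dstar - fun j => ((m j : ℤ))) = 0 := by
      by_contra hne
      have hmem : (dstar - fun j => ((m j : ℤ))) ∈ s.support := Finsupp.mem_support_iff.2 hne
      have h2 : (dstar - fun j => ((m j : ℤ))) 0 ≤ D 0 := hDmax _ hmem
      have h3 : M 0 ≤ m 0 := by
        simp [hdstar] at h2; omega
      have : m = M := Finsupp.ext fun j => by rw [Subsingleton.elim j 0]; omega
      exact hmM this
    rw [hzero, smul_zero]
  · intro hMn; exact absurd hM hMn

lemma my_fcap_fin_one (F : ℤ → Submodule k U) (p : MIdx 1) :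
    fcap (fun _ : Fin 1 => F) p = F (p 0) := by
  unfold fcap
  rw [show (fun i : Fin 1 => F (p i)) = fun _ : Fin 1 => F (p 0) from
    funext fun i => by rw [Subsingleton.elim i 0]]
  exact iInf_const

end MyHelpers

/-- `f` is strict iff the cokernel of `Rees(f)` is torsion-free over
`k[z]`. -/
theorem strict_iff_rees_coker_torsionFree {k V W : Type*} [Field k]
    [AddCommGroup V] [Module k V] [AddCommGroup W] [Module k W]
    [FiniteDimensional k V] [FiniteDimensional k W]
    (F : ℤ → Submodule k V) (G : ℤ → Submodule k W) (hF : IsFilt F) (hG : IsFilt G)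
    (f : V →ₗ[k] W) (hf : ∀ p, Submodule.map f (F p) ≤ G p) :
    (∀ p : ℤ, Submodule.map f (F p) = G p ⊓ LinearMap.range f) ↔
      ∀ (a : MvPolynomial (Fin 1) k)
        (x : ↥(ReesModule (fun _ : Fin 1 => G) (fun _ => hG)) ⧸
          LinearMap.range (reesHom f (fun _ : Fin 1 => hF) (fun _ => hG) (fun _ p => hf p))),
        a • x = 0 → a = 0 ∨ x = 0 := by
  classical
  constructor
  · -- strict ⇒ torsion-free
    intro hstrict a x hax
    by_cases ha : a = 0
    · exact Or.inl ha
    right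
    obtain ⟨t, rfl⟩ := Submodule.Quotient.mk_surjective _ x
    rw [← Submodule.Quotient.mk_smul, Submodule.Quotient.mk_eq_zero] at hax
    obtain ⟨s, hs⟩ := hax
    have hval : ∀ d, (a • (t : MIdx 1 →₀ W)) d = f ((s : MIdx 1 →₀ V) d) := by
      intro d
      have h1 : ((reesHom f (fun _ : Fin 1 => hF) (fun _ => hG) (fun _ p => hf p) s :
          ↥(ReesModule (fun _ : Fin 1 => G) (fun _ => hG))) : MIdx 1 →₀ W)
          = reesMapA f (s : MIdx 1 →₀ V) := rfl
      have h2 := congrArg (fun y : ↥(ReesModule (fun _ : Fin 1 => G) (fun _ => hG)) =>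
        (y : MIdx 1 →₀ W) d) hs
      simp only [h1] at h2
      rw [Submodule.coe_smul] at h2
      rw [← h2, reesMapA_apply]
    -- project to W ⧸ range f
    set π : W →ₗ[k] (W ⧸ LinearMap.range f) := (LinearMap.range f).mkQ with hπ
    have htb : (a • Finsupp.mapRange.linearMap π (t : MIdx 1 →₀ W)) = 0 := by
      rw [← mapRange_poly_smul]
      refine Finsupp.ext fun d => ?_
      rw [Finsupp.mapRange.linearMap_apply, Finsupp.mapRange_apply, hval d]
      rw [hπ, Submodule.mkQ_apply, Finsupp.coe_zero, Pi.zero_apply]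
      rw [Submodule.Quotient.mk_eq_zero]
      exact ⟨_, rfl⟩
    have htzero := my_torsionFree a _ ha htb
    have hmem : ∀ d : MIdx 1, (t : MIdx 1 →₀ W) d ∈ LinearMap.range f := by
      intro d
      have := congrArg (fun y : MIdx 1 →₀ (W ⧸ LinearMap.range f) => y d) htzero
      simp only [Finsupp.mapRange.linearMap_apply, Finsupp.mapRange_apply] at this
      rw [hπ, Submodule.mkQ_apply] at this
      rw [← Submodule.Quotient.mk_eq_zero]
      exact this
    -- choose preimages
    have hchoice : ∀ d : MIdx 1, ∃ v : V, v ∈ F (-(d 0)) ∧ f v = (t : MIdx 1 →₀ W) d := by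
      intro d
      have hG' : (t : MIdx 1 →₀ W) d ∈ G (-(d 0)) := by
        have h3 := mem_ReesModule_iff.1 t.2 d
        rw [my_fcap_fin_one] at h3
        simpa using h3
      have : (t : MIdx 1 →₀ W) d ∈ Submodule.map f (F (-(d 0))) := by
        rw [hstrict]
        exact ⟨hG', hmem d⟩
      obtain ⟨v, hv1, hv2⟩ := this
      exact ⟨v, hv1, hv2⟩
    choose c hc1 hc2 using hchoice
    set c' : MIdx 1 → V := fun d => if (t : MIdx 1 →₀ W) d = 0 then 0 else c d with hc'
    set u : MIdx 1 →₀ V := Finsupp.onFinset (t : MIdx 1 →₀ W).support c'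
      (fun d hd => by
        rw [Finsupp.mem_support_iff]
        intro h0
        apply hd
        rw [hc']
        simp [h0]) with hu
    have huR : u ∈ ReesModule (fun _ : Fin 1 => F) (fun _ => hF) := by
      rw [mem_ReesModule_iff]
      intro d
      rw [my_fcap_fin_one]
      rw [hu]
      simp only [Finsupp.onFinset_apply]
      rw [hc']
      by_cases h0 : (t : MIdx 1 →₀ W) d = 0
      · simp [h0]
      · simpa [h0] using hc1 d
    rw [Submodule.Quotient.mk_eq_zero]
    refine ⟨⟨u, huR⟩, ?_⟩
    apply Subtype.ext
    refine Finsupp.ext fun d => ?_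
    show reesMapA f u d = (t : MIdx 1 →₀ W) d
    rw [reesMapA_apply, hu]
    simp only [Finsupp.onFinset_apply]
    rw [hc']
    by_cases h0 : (t : MIdx 1 →₀ W) d = 0
    · simp [h0]
    · simpa [h0] using hc2 d
  · -- torsion-free ⇒ strict
    intro htf p
    apply le_antisymm
    · exact le_inf (hf p) (LinearMap.map_le_range)
    intro w hw
    have hwG : w ∈ G p := hw.1
    obtain ⟨v, rfl⟩ := hw.2
    obtain ⟨P, hP⟩ := hF.exh
    set N : ℕ := (p - P).toNat with hN
    have hFN : F (p - (N : ℤ)) = ⊤ := hP _ (by omega)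
    set d₀ : MIdx 1 := fun _ => -p with hd₀
    set g : MIdx 1 := fun _ => (N : ℤ) with hg
    set t : MIdx 1 →₀ W := Finsupp.single d₀ (f v) with ht0
    have ht : t ∈ ReesModule (fun _ : Fin 1 => G) (fun _ => hG) := by
      rw [mem_ReesModule_iff]
      intro d
      rw [my_fcap_fin_one]
      rw [ht0, Finsupp.single_apply]
      by_cases hd : d₀ = d
      · subst hd
        simpa [hd₀] using hwG
      · simp [hd]
    set s₀ : MIdx 1 →₀ V := Finsupp.single (d₀ + g) v with hs₀0
    have hs₀ : s₀ ∈ ReesModule (fun _ : Fin 1 => F) (fun _ => hF) := by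
      rw [mem_ReesModule_iff]
      intro d
      rw [my_fcap_fin_one]
      rw [hs₀0, Finsupp.single_apply]
      by_cases hd : d₀ + g = d
      · subst hd
        have : (-(d₀ + g)) 0 = p - (N : ℤ) := by simp [hd₀, hg]; ring
        rw [this, hFN]
        trivial
      · simp [hd]
    set a : MvPolynomial (Fin 1) k := MvPolynomial.monomial (Finsupp.single 0 N) 1 with ha0
    have ha : a ≠ 0 := by
      rw [ha0]
      intro h
      have := MvPolynomial.monomial_eq_zero.1 h
      exact one_ne_zero this
    have key : a • (⟨t, ht⟩ : ↥(ReesModule (fun _ : Fin 1 => G) (fun _ => hG)))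
        = reesHom f (fun _ : Fin 1 => hF) (fun _ => hG) (fun _ p => hf p) ⟨s₀, hs₀⟩ := by
      apply Subtype.ext
      rw [Submodule.coe_smul]
      refine Finsupp.ext fun d => ?_
      rw [ha0, my_monomial_smul_apply]
      have hgg : (fun j : Fin 1 => (((Finsupp.single (0 : Fin 1) N) j : ℕ) : ℤ)) = g := by
        funext j
        rw [Subsingleton.elim j 0]
        simp [hg]
      rw [hgg, one_smul]
      show t (d - g) = reesMapA f s₀ d
      rw [reesMapA_apply, ht0, hs₀0, Finsupp.single_apply, Finsupp.single_apply]
      by_cases hd : d₀ + g = d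
      · have : d₀ = d - g := by rw [← hd]; funext j; simp
        rw [if_pos this, if_pos hd]
      · have : d₀ ≠ d - g := by
          intro h'
          apply hd
          rw [h']
          funext j; simp
        rw [if_neg this, if_neg hd, map_zero]
    have hzero : a • (Submodule.Quotient.mk (⟨t, ht⟩ :
        ↥(ReesModule (fun _ : Fin 1 => G) (fun _ => hG))) :
        ↥(ReesModule (fun _ : Fin 1 => G) (fun _ => hG)) ⧸
          LinearMap.range (reesHom f (fun _ : Fin 1 => hF) (fun _ => hG) (fun _ p => hf p))) = 0 := by
      rw [← Submodule.Quotient.mk_smul, key, Submodule.Quotient.mk_eq_zero]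
      exact ⟨_, rfl⟩
    rcases htf a _ hzero with h | h
    · exact absurd h ha
    rw [Submodule.Quotient.mk_eq_zero] at h
    obtain ⟨uu, huu⟩ := h
    have h1 : f ((uu : MIdx 1 →₀ V) d₀) = t d₀ := by
      have := congrArg (fun y : ↥(ReesModule (fun _ : Fin 1 => G) (fun _ => hG)) =>
        (y : MIdx 1 →₀ W) d₀) huu
      exact this
    have h2 : (uu : MIdx 1 →₀ V) d₀ ∈ F p := by
      have := uu.2 d₀
      rw [my_fcap_fin_one] at this
      simpa [hd₀] using this
    refine ⟨_, h2, ?_⟩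
    rw [h1, ht0, Finsupp.single_eq_same]
end

section
/- Let (V, F_1, ..., F_n) be a finite dimensional multifiltered k-vector space. The fiber of the Rees module at the origin, i.e. Rees(V) ⊗_{k[z_1,...,z_n]} k[z]/(z_1,...,z_n), is isomorphic as a ℤ^n-graded k-vector space to ⊕_{p∈ℤ^n} D^{-p}, where D^p = F^p/(Σ_{i=1}^n F^{p+e_i}). -/
open ToricRees

open scoped DirectSum

section ReesFiber

open ToricRees

variable {k V : Type*} [Field k] [AddCommGroup V] [Module k V] {n : ℕ}
variable (F : Fin n → ℤ → Submodule k V)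

/-- The map `⨁_d fcap F(-d) → (ℤ^n →₀ V)`. -/
noncomputable def reesPsi : (⨁ d : MIdx n, ↥(fcap F (-d))) →ₗ[k] (MIdx n →₀ V) :=
  DirectSum.toModule k _ _ (fun d => Finsupp.lsingle d ∘ₗ (fcap F (-d)).subtype)

lemma reesPsi_apply (x : ⨁ d : MIdx n, ↥(fcap F (-d))) (e : MIdx n) :
    reesPsi F x e = (x e : V) := by
  induction x using DirectSum.induction_on with
  | zero => simp [reesPsi]
  | of d v =>
      rw [reesPsi, ← DirectSum.lof_eq_of k, DirectSum.toModule_lof, DirectSum.lof_eq_of]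
      rcases eq_or_ne d e with rfl | h
      · simp [DirectSum.of_eq_same]
      · simp [Finsupp.single_apply, h, DirectSum.of_eq_of_ne _ _ _ h.symm]
  | add a b ha hb => simp [map_add, ha, hb]

variable (hF : ∀ i, IsFilt (F i))

lemma reesPsi_mem (x : ⨁ d : MIdx n, ↥(fcap F (-d))) :
    reesPsi F x ∈ (ReesModule F hF).restrictScalars k := by
  intro d
  rw [reesPsi_apply]
  exact (x d).2

/-- `⨁_d fcap F(-d) ≃ Rees(V)` as `k`-modules. -/
noncomputable def reesPsi' : (⨁ d : MIdx n, ↥(fcap F (-d))) →ₗ[k]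
    ↥((ReesModule F hF).restrictScalars k) :=
  (reesPsi F).codRestrict _ (reesPsi_mem F hF)

lemma reesPsi'_bijective : Function.Bijective (reesPsi' F hF) := by
  constructor
  · intro a b hab
    refine DFinsupp.ext fun d => ?_
    have : ((reesPsi' F hF a : MIdx n →₀ V)) d = ((reesPsi' F hF b : MIdx n →₀ V)) d := by
      rw [hab]
    simpa only [reesPsi', LinearMap.codRestrict_apply, reesPsi_apply, Subtype.ext_iff] using this
  · rintro ⟨s, hs⟩
    refine ⟨DFinsupp.mk s.support (fun d => ⟨s d.1, hs d.1⟩), ?_⟩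
    ext e
    show reesPsi F _ e = s e
    rw [reesPsi_apply, DFinsupp.mk_apply]
    split
    · rfl
    · next h => simp [Finsupp.notMem_support_iff.1 h]

noncomputable def reesPsiE : (⨁ d : MIdx n, ↥(fcap F (-d))) ≃ₗ[k]
    ↥((ReesModule F hF).restrictScalars k) :=
  LinearEquiv.ofBijective _ (reesPsi'_bijective F hF)

/-- The quotient map on components. -/
noncomputable def reesQ :
    (⨁ d : MIdx n, ↥(fcap F (-d))) →ₗ[k] ⨁ d : MIdx n, Dmod F (-d) :=
  DFinsupp.mapRange.linearMap (fun d =>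
    ((Submodule.comap (fcap F (-d)).subtype
        (⨆ i : Fin n, fcap F (-d + Pi.single i 1))).mkQ :
      ↥(fcap F (-d)) →ₗ[k] Dmod F (-d)))

end ReesFiber
section ReesFiber2

open ToricRees

variable {k V : Type*} [Field k] [AddCommGroup V] [Module k V] {n : ℕ}
variable (F : Fin n → ℤ → Submodule k V) (hF : ∀ i, IsFilt (F i))

lemma reesQ_apply (x : ⨁ d : MIdx n, ↥(fcap F (-d))) (d : MIdx n) :
    reesQ F x d = Submodule.Quotient.mk (x d) := by
  rw [reesQ]
  erw [DFinsupp.mapRange.linearMap_apply, DFinsupp.mapRange_apply]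
  rfl

lemma reesQ_surjective : Function.Surjective (reesQ F) := by
  intro y
  induction y using DirectSum.induction_on with
  | zero => exact ⟨0, map_zero _⟩
  | of d w =>
      obtain ⟨v, rfl⟩ := Submodule.mkQ_surjective _ w
      refine ⟨DirectSum.of _ d v, ?_⟩
      refine DFinsupp.ext fun e => ?_
      rw [reesQ_apply]
      rcases eq_or_ne d e with rfl | h
      · erw [DirectSum.of_eq_same, DirectSum.of_eq_same]; rfl
      · erw [DirectSum.of_eq_of_ne _ _ _ h.symm, DirectSum.of_eq_of_ne _ _ _ h.symm]
        rfl
  | add a b ha hb =>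
      obtain ⟨xa, rfl⟩ := ha
      obtain ⟨xb, rfl⟩ := hb
      exact ⟨xa + xb, map_add _ _ _⟩

lemma mem_ker_reesQ (x : ⨁ d : MIdx n, ↥(fcap F (-d))) :
    x ∈ LinearMap.ker (reesQ F) ↔
      ∀ d : MIdx n, (x d : V) ∈ ⨆ i : Fin n, fcap F (-d + Pi.single i 1) := by
  rw [LinearMap.mem_ker]
  have key : ∀ d : MIdx n, (reesQ F x d = 0) ↔
      (x d : V) ∈ ⨆ i : Fin n, fcap F (-d + Pi.single i 1) := by
    intro d
    rw [reesQ_apply]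
    rw [show (0 : Dmod F (-d)) = Submodule.Quotient.mk 0 from rfl]
    erw [Submodule.Quotient.eq]
    simp [Submodule.mem_comap]
  constructor
  · intro h d
    exact (key d).1 (by rw [h]; rfl)
  · intro h
    exact DFinsupp.ext fun d => (key d).2 (h d)

end ReesFiber2
section ReesFiber3

open ToricRees

variable {k V : Type*} [Field k] [AddCommGroup V] [Module k V] {n : ℕ}
variable {F : Fin n → ℤ → Submodule k V} {hF : ∀ i, IsFilt (F i)}

lemma neg_sub_single (d : MIdx n) (g : MIdx n) : -(d - g) = -d + g := by
  funext j; simp; ring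

lemma neg_add_cancel_single (d : MIdx n) (g : MIdx n) : -(d + g) + g = -d := by
  funext j; simp

lemma fcap_le_fcap (hF : ∀ i, IsFilt (F i)) {p q : MIdx n} (h : ∀ j, p j ≤ q j) :
    fcap F q ≤ fcap F p :=
  le_iInf fun j => (iInf_le _ j).trans ((hF j).mono (h j))

lemma mem_J_iff (x : ↥((ReesModule F hF).restrictScalars k)) :
    x ∈ (⨆ i : Fin n, Submodule.comap ((ReesModule F hF).restrictScalars k).subtype
          (Submodule.map (shiftL (k := k) (V := V) (Pi.single i 1))
            ((ReesModule F hF).restrictScalars k))) ↔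
      ∀ d : MIdx n, (x : MIdx n →₀ V) d ∈ ⨆ i : Fin n, fcap F (-d + Pi.single i 1) := by
  classical
  constructor
  · intro hx d
    set P : Submodule k ↥((ReesModule F hF).restrictScalars k) :=
      ⨅ e : MIdx n, Submodule.comap
        ((Finsupp.lapply e : (MIdx n →₀ V) →ₗ[k] V) ∘ₗ
          ((ReesModule F hF).restrictScalars k).subtype)
        (⨆ i : Fin n, fcap F (-e + Pi.single i 1)) with hP
    have hJP : (⨆ i : Fin n, Submodule.comap ((ReesModule F hF).restrictScalars k).subtype
          (Submodule.map (shiftL (k := k) (V := V) (Pi.single i 1))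
            ((ReesModule F hF).restrictScalars k))) ≤ P := by
      refine iSup_le fun i => ?_
      intro y hy
      simp only [Submodule.mem_comap] at hy
      obtain ⟨t, ht, hteq⟩ := hy
      refine Submodule.mem_iInf _ |>.2 fun e => ?_
      simp only [Submodule.mem_comap, LinearMap.comp_apply, Finsupp.lapply_apply,
        Submodule.subtype_apply]
      have hv : (y : MIdx n →₀ V) e = t (e - Pi.single i 1) := by
        have heq2 : shiftL (k := k) (Pi.single i 1) t = (y : MIdx n →₀ V) := hteq
        rw [← heq2, shiftL_apply]
      rw [hv]
      have h1 : t (e - Pi.single i 1) ∈ fcap F (-(e - Pi.single i 1)) := ht _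
      rw [neg_sub_single] at h1
      exact le_iSup (fun i => fcap F (-e + Pi.single i 1)) i h1
    have hxP := Submodule.mem_iInf _ |>.1 (hP ▸ hJP hx) d
    simpa using hxP
  · intro h
    have hchoice : ∀ d : MIdx n, ∃ f : Fin n →₀ V,
        (∀ i, f i ∈ fcap F (-d + Pi.single i 1)) ∧ (f.sum fun _ v => v) = (x : MIdx n →₀ V) d ∧
        ((x : MIdx n →₀ V) d = 0 → f = 0) := by
      intro d
      by_cases hd : (x : MIdx n →₀ V) d = 0
      · exact ⟨0, fun i => by simp, by simp [hd], fun _ => rfl⟩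
      · obtain ⟨f, h1, h2⟩ := (Submodule.mem_iSup_iff_exists_finsupp _ _).1 (h d)
        exact ⟨f, h1, h2, fun hc => absurd hc hd⟩
    choose f hf1 hf2 hf0 using hchoice
    have hsupp : ∀ (i : Fin n) (d : MIdx n), f d i ≠ 0 → d ∈ (x : MIdx n →₀ V).support := by
      intro i d hne
      rw [Finsupp.mem_support_iff]
      intro hc
      rw [hf0 d hc] at hne
      simp at hne
    set t : Fin n → (MIdx n →₀ V) := fun i =>
      Finsupp.onFinset (x : MIdx n →₀ V).support (fun d => f d i) (hsupp i) with hT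
    have ht_apply : ∀ i d, t i d = f d i := fun i d => rfl
    have ht_mem : ∀ i d, t i d ∈ fcap F (-d + Pi.single i 1) := fun i d => hf1 d i
    have ht_rees : ∀ i, t i ∈ ReesSet F := by
      intro i d
      refine fcap_le_fcap hF (fun j => ?_) (ht_mem i d)
      simp only [Pi.add_apply, Pi.neg_apply]
      have : (0:ℤ) ≤ (Pi.single i 1 : MIdx n) j := by
        rcases eq_or_ne j i with rfl | hj
        · simp
        · simp [Pi.single_apply, hj]
      omega
    -- the i-th piece is in the image of the i-th shift
    set u : Fin n → (MIdx n →₀ V) := fun i =>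
      Finsupp.onFinset ((x : MIdx n →₀ V).support.image (· - Pi.single i 1))
        (fun d => t i (d + Pi.single i 1))
        (fun d hd => by
          refine Finset.mem_image.2 ⟨d + Pi.single i 1, hsupp i _ hd, by simp⟩) with hU
    have hu_rees : ∀ i, u i ∈ ReesSet F := by
      intro i d
      have := ht_mem i (d + Pi.single i 1)
      rw [neg_add_cancel_single] at this
      exact this
    have hshift : ∀ i, shiftL (k := k) (Pi.single i 1) (u i) = t i := by
      intro i
      refine Finsupp.ext fun d => ?_
      rw [shiftL_apply]
      show t i (d - Pi.single i 1 + Pi.single i 1) = t i d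
      rw [sub_add_cancel]
    have hsum : ((x : MIdx n →₀ V)) = ∑ i : Fin n, t i := by
      refine Finsupp.ext fun d => ?_
      rw [Finsupp.finset_sum_apply]
      have : ∑ i : Fin n, t i d = ∑ i : Fin n, f d i := rfl
      rw [this, ← Finsupp.sum_fintype (f d) (fun _ v => v) (fun _ => rfl), hf2 d]
    have hx_eq : x = ∑ i : Fin n, (⟨t i, ht_rees i⟩ : ↥((ReesModule F hF).restrictScalars k)) := by
      apply Subtype.ext
      rw [hsum]
      simp
    rw [hx_eq]
    refine Submodule.sum_mem _ fun i _ => ?_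
    refine Submodule.mem_iSup_of_mem i ?_
    simp only [Submodule.mem_comap, Submodule.subtype_apply]
    exact ⟨u i, hu_rees i, hshift i⟩

end ReesFiber3
/-- The fibre of the Rees module at the origin,
`Rees(V)/(z_1,...,z_n)Rees(V)`, is the graded vector space `⊕_p D^{-p}`. -/
theorem rees_fiber_at_origin {k V : Type*} [Field k] [AddCommGroup V] [Module k V]
    [FiniteDimensional k V] {n : ℕ} (F : Fin n → ℤ → Submodule k V)
    (hF : ∀ i, IsFilt (F i)) :
    ∃ e : (↥((ReesModule F hF).restrictScalars k) ⧸
            ⨆ i : Fin n, Submodule.comap ((ReesModule F hF).restrictScalars k).subtype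
              (Submodule.map (shiftL (k := k) (V := V) (Pi.single i 1))
                ((ReesModule F hF).restrictScalars k)))
          ≃ₗ[k] ⨁ d : MIdx n, Dmod F (-d),
      ∀ (x : ↥((ReesModule F hF).restrictScalars k)) (d : MIdx n) (v : V)
        (hv : v ∈ fcap F (-d)), (x : MIdx n →₀ V) = Finsupp.single d v →
        e (Submodule.Quotient.mk x)
          = DirectSum.of (fun d : MIdx n => Dmod F (-d)) d (Submodule.Quotient.mk ⟨v, hv⟩) := by
  classical
  have hcoe : ∀ (y : ⨁ d : MIdx n, ↥(fcap F (-d))) (d : MIdx n),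
      ((reesPsiE F hF y : MIdx n →₀ V)) d = (y d : V) := fun y d => reesPsi_apply F y d
  have hiff : ∀ z : ⨁ d : MIdx n, ↥(fcap F (-d)),
      (reesPsiE F hF z ∈ ⨆ i : Fin n, Submodule.comap ((ReesModule F hF).restrictScalars k).subtype
        (Submodule.map (shiftL (k := k) (V := V) (Pi.single i 1))
          ((ReesModule F hF).restrictScalars k)) ↔ z ∈ LinearMap.ker (reesQ F)) := fun z => by
    rw [mem_J_iff, mem_ker_reesQ]
    exact forall_congr' fun d => by rw [hcoe]
  have hmap : (⨆ i : Fin n, Submodule.comap ((ReesModule F hF).restrictScalars k).subtype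
        (Submodule.map (shiftL (k := k) (V := V) (Pi.single i 1))
          ((ReesModule F hF).restrictScalars k))).map ((reesPsiE F hF).symm : _ →ₗ[k] _)
      = LinearMap.ker (reesQ F) := by
    ext y
    simp only [Submodule.mem_map]
    constructor
    · rintro ⟨z, hz, rfl⟩
      exact (hiff _).1 (by rwa [LinearEquiv.coe_coe, LinearEquiv.apply_symm_apply])
    · intro hy
      exact ⟨reesPsiE F hF y, (hiff y).2 hy, (reesPsiE F hF).symm_apply_apply y⟩
  refine ⟨(Submodule.Quotient.equiv _ _ (reesPsiE F hF).symm hmap).trans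
    ((reesQ F).quotKerEquivOfSurjective (reesQ_surjective F)), ?_⟩
  intro x d v hv hxv
  have hsymm : (reesPsiE F hF).symm x = DirectSum.of (fun d : MIdx n => ↥(fcap F (-d))) d ⟨v, hv⟩ := by
    apply (reesPsiE F hF).injective
    rw [LinearEquiv.apply_symm_apply]
    apply Subtype.ext
    refine Finsupp.ext fun e' => ?_
    show (x : MIdx n →₀ V) e' = _
    rw [hxv, hcoe]
    rcases eq_or_ne d e' with rfl | h
    · rw [Finsupp.single_eq_same, DirectSum.of_eq_same]
    · rw [Finsupp.single_eq_of_ne' h, DirectSum.of_eq_of_ne _ _ _ h.symm]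
      simp
  have hq : ∀ y, (reesQ F).quotKerEquivOfSurjective (reesQ_surjective F)
      (Submodule.Quotient.mk y) = reesQ F y := fun y => rfl
  rw [LinearEquiv.trans_apply, Submodule.Quotient.equiv_apply, Submodule.mapQ_apply,
    LinearEquiv.coe_coe, hsymm, hq]
  refine DFinsupp.ext fun e' => ?_
  rw [reesQ_apply]
  rcases eq_or_ne d e' with rfl | h
  · erw [DirectSum.of_eq_same, DirectSum.of_eq_same]
  · erw [DirectSum.of_eq_of_ne _ _ _ h.symm, DirectSum.of_eq_of_ne _ _ _ h.symm]
    rfl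
end

section
/- Let V be a finite dimensional ℤ^n-graded complex vector space and consider the trivial equivariant holomorphic bundle Ṽ on ℂ^n. Every equivariant holomorphic connection on Ṽ has the form ∇ = d + Ω where Ω = Σ_{p∈ℤ_{≥0}^n} Σ_{i=1}^n A_{p,i} z^p dz_i/z_i with A_{p,i} ∈ End(V) of multidegree -p and A_{p,i} = 0 whenever p_i = 0. In particular, every equivariant holomorphic connection on Ṽ is algebraic. -/
open Filter Topology

/-- A continuous function vanishing whenever all coordinates are nonzero vanishes. -/
lemma aux_dense_zero {n : ℕ} {V : Type*} [NormedAddCommGroup V]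
    (g : (Fin n → ℂ) → V) (hg : Continuous g)
    (h : ∀ z : Fin n → ℂ, (∀ j, z j ≠ 0) → g z = 0) : ∀ z, g z = 0 := by
  intro z
  set t : ℕ → ℂ := fun k => ((k : ℂ) + 1)⁻¹ with ht
  have htinj : Function.Injective t := by
    intro a b hab
    have : ((a : ℂ) + 1) = ((b : ℂ) + 1) := inv_injective hab
    have h2 : ((a:ℂ)) = b := by linear_combination this
    exact_mod_cast h2
  have hlim : Tendsto t atTop (𝓝 0) := by
    have hre : Tendsto (fun k : ℕ => ((k : ℝ) + 1)⁻¹) atTop (𝓝 0) := by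
      simpa [one_div] using tendsto_one_div_add_atTop_nhds_zero_nat (𝕜 := ℝ)
    have := (Complex.continuous_ofReal.tendsto 0).comp hre
    have heq : (Complex.ofReal ∘ fun k : ℕ => ((k:ℝ) + 1)⁻¹) = t := by
      funext k; simp only [ht, Function.comp]; push_cast; ring
    rw [heq] at this
    simpa using this
  have hev : ∀ᶠ k in atTop, ∀ j, z j + t k ≠ 0 := by
    rw [← Nat.cofinite_eq_atTop, eventually_all]
    intro j
    have hfin : (t ⁻¹' {-(z j)}).Finite :=
      Set.Finite.preimage htinj.injOn (Set.finite_singleton _)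
    filter_upwards [hfin.eventually_cofinite_notMem] with k hk
    intro hc
    exact hk (by simpa [eq_neg_iff_add_eq_zero, add_comm] using hc)
  have harg : Tendsto (fun k => fun j => z j + t k) atTop (𝓝 z) := by
    rw [tendsto_pi_nhds]
    intro j
    simpa using tendsto_const_nhds.add hlim
  have h1 : Tendsto (fun k => g (fun j => z j + t k)) atTop (𝓝 (g z)) :=
    (hg.tendsto z).comp harg
  have h2 : Tendsto (fun k => g (fun j => z j + t k)) atTop (𝓝 0) := by
    apply tendsto_const_nhds.congr'
    filter_upwards [hev] with k hk
    exact (h _ hk).symm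
  exact tendsto_nhds_unique h1 h2

/-- A continuous multi-homogeneous function is a monomial (or zero if the degree is negative). -/
lemma aux_homog {n : ℕ} {V : Type*} [NormedAddCommGroup V] [NormedSpace ℂ V]
    (f : (Fin n → ℂ) → V) (hf : Continuous f) (m : Fin n → ℤ)
    (h : ∀ (lam : Fin n → ℂˣ) (z : Fin n → ℂ),
      f (fun j => (lam j : ℂ) * z j) = (∏ j, (lam j : ℂ) ^ m j) • f z) :
    ∀ z, f z = if ∀ j, 0 ≤ m j then
      (∏ j, z j ^ (m j).toNat) • f (fun _ => 1) else 0 := by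
  classical
  have hU : ∀ z : Fin n → ℂ, (∀ j, z j ≠ 0) →
      f z = (∏ j, z j ^ m j) • f (fun _ => 1) := by
    intro z hz
    have := h (fun j => Units.mk0 (z j) (hz j)) (fun _ => 1)
    simpa using this
  by_cases hm : ∀ j, 0 ≤ m j
  · simp only [if_pos hm]
    have hcont : Continuous fun z : Fin n → ℂ =>
        f z - (∏ j, z j ^ (m j).toNat) • f (fun _ => 1) := by
      apply hf.sub
      exact (continuous_finset_prod _ fun j _ => (continuous_apply j).pow _).smul
        continuous_const
    have key : ∀ z : Fin n → ℂ,
        f z - (∏ j, z j ^ (m j).toNat) • f (fun _ => 1) = 0 := by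
      apply aux_dense_zero _ hcont
      intro z hz
      rw [hU z hz, sub_eq_zero]
      congr 1
      apply Finset.prod_congr rfl
      intro j _
      have hmj : m j = ((m j).toNat : ℤ) := (Int.toNat_of_nonneg (hm j)).symm
      conv_lhs => rw [hmj]
      exact zpow_natCast _ _
    intro z
    exact sub_eq_zero.mp (key z)
  · simp only [if_neg hm]
    push_neg at hm
    obtain ⟨j0, hj0⟩ := hm
    have hj0' : m j0 < 0 := by omega
    set k : ℕ := (-(m j0)).toNat with hk
    have hkpos : 0 < k := by omega
    have hone : f (fun _ => 1) = 0 := by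
      have hcl : ∀ t : ℂ, t ≠ 0 →
          t ^ k • f (fun j => if j = j0 then t else 1) = f (fun _ => 1) := by
        intro t ht
        have := h (fun j => if j = j0 then Units.mk0 t ht else 1) (fun _ => 1)
        simp only [mul_one] at this
        have harg : (fun j => ((if j = j0 then Units.mk0 t ht else 1 : ℂˣ) : ℂ))
            = fun j => if j = j0 then t else 1 := by
          funext j; by_cases hj : j = j0 <;> simp [hj]
        have hprod : (∏ j, ((if j = j0 then Units.mk0 t ht else 1 : ℂˣ) : ℂ) ^ m j)
            = t ^ m j0 := by
          rw [Finset.prod_eq_single j0]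
          · simp
          · intro b _ hb; simp [hb]
          · simp
        rw [harg, hprod] at this
        rw [this, smul_smul]
        rw [← zpow_natCast t k]
        rw [← zpow_add₀ ht]
        have : (k : ℤ) + m j0 = 0 := by omega
        rw [this, zpow_zero, one_smul]
      have h1 : Filter.Tendsto (fun t : ℂ => t ^ k • f (fun j => if j = j0 then t else 1))
          (𝓝[≠] 0) (𝓝 0) := by
        have hb : Filter.Tendsto (fun t : ℂ => t ^ k • f (fun j => if j = j0 then t else 1))
            (𝓝 0) (𝓝 ((0:ℂ) ^ k • f (fun j => if j = j0 then (0:ℂ) else 1))) := by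
          apply Filter.Tendsto.smul
          · exact (continuous_pow k).tendsto 0
          · apply (hf.tendsto _).comp
            rw [tendsto_pi_nhds]
            intro j
            by_cases hj : j = j0 <;> simp [hj, tendsto_const_nhds]
            exact continuous_id.tendsto 0
        rw [zero_pow (by omega), zero_smul] at hb
        exact hb.mono_left nhdsWithin_le_nhds
      have h2 : Filter.Tendsto (fun t : ℂ => t ^ k • f (fun j => if j = j0 then t else 1))
          (𝓝[≠] 0) (𝓝 (f (fun _ => 1))) := by
        apply tendsto_const_nhds.congr'
        filter_upwards [self_mem_nhdsWithin] with t ht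
        exact (hcl t ht).symm
      exact (tendsto_nhds_unique h2 h1)
    apply aux_dense_zero _ hf
    intro z hz
    rw [hU z hz, hone, smul_zero]


/-- Every equivariant holomorphic connection `∇ = d + Ω` on the trivial
equivariant bundle `Ṽ` over `ℂ^n` is algebraic: its connection form is
`Ω = Σ_{p,i} A_{p,i} z^p dz_i/z_i` with `A_{p,i} ∈ End(V)` of multidegree `-p`, vanishing
when `p_i = 0`.  (Here `Ω z i` is the coefficient of `dz_i`, and the exponent is written
`q = p - e_i ≥ 0`.) -/
theorem equivariant_connection_algebraic {n : ℕ} {V : Type*}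
    [NormedAddCommGroup V] [NormedSpace ℂ V] [FiniteDimensional ℂ V]
    (ℬ : (Fin n → ℤ) → Submodule ℂ V) (hdec : DirectSum.IsInternal ℬ)
    (A : (Fin n → ℂˣ) → (V →ₗ[ℂ] V))
    (hA : ∀ (lam : Fin n → ℂˣ) (p : Fin n → ℤ) (v : V), v ∈ ℬ p →
      A lam v = (∏ i, (lam i : ℂ) ^ (-(p i))) • v)
    (Ω : (Fin n → ℂ) → Fin n → (V →L[ℂ] V)) (hΩ : Differentiable ℂ Ω)
    (hequiv : ∀ (lam : Fin n → ℂˣ) (z : Fin n → ℂ) (i : Fin n) (v : V),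
      Ω (fun j => (lam j : ℂ) * z j) i v
        = ((lam i : ℂ))⁻¹ • A lam (Ω z i (A (fun j => (lam j)⁻¹) v))) :
    ∃ c : (Fin n → ℕ) →₀ (Fin n → (V →L[ℂ] V)),
      (∀ (q : Fin n → ℕ) (i : Fin n) (p : Fin n → ℤ) (v : V), v ∈ ℬ p →
        c q i v ∈ ℬ (fun j => p j - q j - (if j = i then 1 else 0))) ∧
      ∀ z i, Ω z i = c.sum fun q E => (∏ j, z j ^ q j) • E i := by
  classical
  set e1 : Fin n → ℂ := fun _ => 1 with he1
  -- the inverse of the direct sum decomposition, and projections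
  set E := LinearEquiv.ofBijective (DirectSum.coeLinearMap ℬ) hdec with hE
  set π : (Fin n → ℤ) → (V →ₗ[ℂ] V) := fun r =>
    (ℬ r).subtype ∘ₗ (DirectSum.component ℂ (Fin n → ℤ) (fun p => ℬ p) r) ∘ₗ
      E.symm.toLinearMap with hπ
  have hπ_apply : ∀ r v, π r v = ((E.symm v) r : V) := fun r v => rfl
  have hπ_mem : ∀ r v, π r v ∈ ℬ r := fun r v => (E.symm v r).2
  have hπ_same : ∀ r v, v ∈ ℬ r → π r v = v := by
    intro r v hv
    rw [hπ_apply, hdec.ofBijective_coeLinearMap_of_mem hv]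
  have hπ_ne : ∀ r s v, v ∈ ℬ s → s ≠ r → π r v = 0 := by
    intro r s v hv hsr
    rw [hπ_apply, hdec.ofBijective_coeLinearMap_of_mem_ne hsr hv,
      ZeroMemClass.coe_zero]
  -- extensionality from the grading
  have hext : ∀ (F G : V →ₗ[ℂ] V), (∀ p v, v ∈ ℬ p → F v = G v) → F = G := by
    intro F G hFG
    ext v
    have hv : v ∈ ⨆ p, ℬ p := by rw [hdec.submodule_iSup_eq_top]; trivial
    refine Submodule.iSup_induction (motive := fun v => F v = G v) ℬ hv
      (fun p x hx => hFG p x hx) (by simp) (fun x y hx hy => by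
        simp only [map_add, hx, hy])
  -- finiteness of the support of the grading
  have hfin : {p : Fin n → ℤ | ℬ p ≠ ⊥}.Finite :=
    WellFoundedGT.finite_ne_bot_of_iSupIndep hdec.submodule_iSupIndep
  set S : Finset (Fin n → ℤ) := hfin.toFinset with hS
  have hS_mem : ∀ p, p ∈ S ↔ ℬ p ≠ ⊥ := by
    intro p; rw [hS, Set.Finite.mem_toFinset]; rfl
  have hv_zero : ∀ p v, v ∈ ℬ p → p ∉ S → v = 0 := by
    intro p v hv hp
    have : ℬ p = ⊥ := by by_contra hne; exact hp ((hS_mem p).2 hne)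
    rw [this] at hv; exact hv
  have hπ_bot : ∀ r, r ∉ S → π r = 0 := by
    intro r hr
    ext v
    have := hπ_mem r v
    have hbot : ℬ r = ⊥ := by by_contra hne; exact hr ((hS_mem r).2 hne)
    rw [hbot] at this
    simpa using this
  -- sum of projections is the identity
  have hsum : ∀ v : V, ∑ r ∈ S, π r v = v := by
    have := hext (∑ r ∈ S, π r) LinearMap.id ?_
    · intro v
      calc ∑ r ∈ S, π r v = (∑ r ∈ S, π r) v := by rw [LinearMap.sum_apply]
        _ = v := by rw [this]; rfl
    · intro s v hv
      rw [LinearMap.sum_apply, LinearMap.id_apply]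
      by_cases hs : s ∈ S
      · rw [Finset.sum_eq_single_of_mem s hs]
        · exact hπ_same s v hv
        · intro r _ hrs; exact hπ_ne r s v hv (fun h => hrs h.symm)
      · have : v = 0 := hv_zero s v hv hs
        simp [this]
  -- the action of A on graded pieces, inverse version
  have hAinv : ∀ (lam : Fin n → ℂˣ) (p : Fin n → ℤ) (v : V), v ∈ ℬ p →
      A (fun j => (lam j)⁻¹) v = (∏ j, (lam j : ℂ) ^ (p j)) • v := by
    intro lam p v hv
    rw [hA _ p v hv]
    congr 1
    apply Finset.prod_congr rfl
    intro j _
    rw [Units.val_inv_eq_inv_val, inv_zpow, ← zpow_neg, neg_neg]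
  -- the projections intertwine the action of A
  have hπA : ∀ (lam : Fin n → ℂˣ) (r : Fin n → ℤ) (w : V),
      π r (A lam w) = (∏ j, (lam j : ℂ) ^ (-(r j))) • π r w := by
    intro lam r
    have := hext ((π r) ∘ₗ (A lam)) ((∏ j, (lam j : ℂ) ^ (-(r j))) • π r) ?_
    · intro w
      calc π r (A lam w) = ((π r) ∘ₗ (A lam)) w := rfl
        _ = ((∏ j, (lam j : ℂ) ^ (-(r j))) • π r) w := by rw [this]
        _ = (∏ j, (lam j : ℂ) ^ (-(r j))) • π r w := rfl
    · intro s v hv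
      rw [LinearMap.comp_apply, LinearMap.smul_apply, hA lam s v hv, map_smul]
      by_cases hsr : s = r
      · subst hsr; rfl
      · rw [hπ_ne r s v hv hsr, smul_zero, smul_zero]
  -- key homogeneity computation
  have key : ∀ (p : Fin n → ℤ) (v : V), v ∈ ℬ p → ∀ (r : Fin n → ℤ) (i : Fin n)
      (z : Fin n → ℂ),
      π r (Ω z i v) =
        if ∀ j, 0 ≤ p j - r j - (if j = i then 1 else 0) then
          (∏ j, z j ^ (p j - r j - (if j = i then 1 else 0)).toNat) • π r (Ω e1 i v)
        else 0 := by
    intro p v hv r i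
    set m : Fin n → ℤ := fun j => p j - r j - (if j = i then 1 else 0) with hm
    have hcont : Continuous fun z : Fin n → ℂ => π r (Ω z i v) := by
      have h1 : Continuous fun z : Fin n → ℂ => Ω z i v :=
        (ContinuousLinearMap.apply ℂ V v).continuous.comp
          ((continuous_apply i).comp hΩ.continuous)
      exact (π r).continuous_of_finiteDimensional.comp h1
    have hom : ∀ (lam : Fin n → ℂˣ) (z : Fin n → ℂ),
        π r (Ω (fun j => (lam j : ℂ) * z j) i v)
          = (∏ j, (lam j : ℂ) ^ m j) • π r (Ω z i v) := by
      intro lam z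
      rw [hequiv lam z i v, hAinv lam p v hv, map_smul, map_smul, map_smul, map_smul, hπA]
      rw [smul_smul, smul_smul]
      congr 1
      have hne : ∀ j, ((lam j : ℂ)) ≠ 0 := fun j => Units.ne_zero _
      have hsplit : ∀ j, (lam j : ℂ) ^ m j
          = (lam j : ℂ) ^ p j * (lam j : ℂ) ^ (-(r j)) *
            (lam j : ℂ) ^ (-(if j = i then (1:ℤ) else 0)) := by
        intro j
        rw [← zpow_add₀ (hne j), ← zpow_add₀ (hne j)]
        congr 1
      rw [Finset.prod_congr rfl (fun j _ => hsplit j), Finset.prod_mul_distrib,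
        Finset.prod_mul_distrib]
      have hlast : (∏ j, (lam j : ℂ) ^ (-(if j = i then (1:ℤ) else 0)))
          = ((lam i : ℂ))⁻¹ := by
        rw [Finset.prod_eq_single i]
        · simp
        · intro b _ hb; simp [hb]
        · simp
      rw [hlast]
      ring
    have := aux_homog _ hcont m hom
    intro z
    rw [this z]
  -- the coefficient maps
  set πC : (Fin n → ℤ) → (V →L[ℂ] V) := fun r =>
    LinearMap.toContinuousLinearMap (π r) with hπC
  have hπC_apply : ∀ r v, πC r v = π r v := fun r v => rfl
  set L : (Fin n → ℕ) → Fin n → (V →L[ℂ] V) := fun q i =>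
    ∑ p ∈ S, (πC (fun j => p j - q j - if j = i then 1 else 0)).comp
      ((Ω e1 i).comp (πC p)) with hL
  set T : Finset (Fin n → ℕ) :=
    Finset.image (fun x : ((Fin n → ℤ) × (Fin n → ℤ)) × Fin n =>
      fun j => (x.1.1 j - x.1.2 j - if j = x.2 then 1 else 0).toNat)
      ((S ×ˢ S) ×ˢ Finset.univ) with hT
  have hLz : ∀ q, q ∉ T → L q = 0 := by
    intro q hq
    funext i
    rw [hL]
    simp only [Pi.zero_apply]
    apply Finset.sum_eq_zero
    intro p hp
    set r : Fin n → ℤ := fun j => p j - q j - if j = i then 1 else 0 with hr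
    by_cases hrS : r ∈ S
    · exfalso
      apply hq
      rw [hT, Finset.mem_image]
      refine ⟨((p, r), i), ?_, ?_⟩
      · rw [Finset.mem_product, Finset.mem_product]
        exact ⟨⟨hp, hrS⟩, Finset.mem_univ i⟩
      · funext j
        simp only [hr]
        omega
    · have : π r = 0 := hπ_bot r hrS
      have hπC0 : πC r = 0 := by
        apply ContinuousLinearMap.coe_injective
        simp [hπC, this]
      rw [hπC0, ContinuousLinearMap.zero_comp]
  set c : (Fin n → ℕ) →₀ (Fin n → (V →L[ℂ] V)) :=
    Finsupp.onFinset T L (fun q hq => by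
      by_contra hqT
      exact hq (hLz q hqT)) with hc
  have hc_apply : ∀ q, c q = L q := fun q => rfl
  -- evaluation of L on a graded piece
  have hLmem : ∀ (q : Fin n → ℕ) (i : Fin n) (p : Fin n → ℤ) (v : V), v ∈ ℬ p →
      p ∈ S → L q i v = π (fun j => p j - q j - if j = i then 1 else 0) (Ω e1 i v) := by
    intro q i p v hv hpS
    rw [hL]
    simp only [ContinuousLinearMap.sum_apply, ContinuousLinearMap.comp_apply]
    rw [Finset.sum_eq_single_of_mem p hpS]
    · rw [hπC_apply, hπC_apply, hπ_same p v hv]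
    · intro p' _ hp'
      rw [hπC_apply, hπC_apply, hπ_ne p' p v hv (fun h => hp' h.symm), map_zero,
        map_zero]
  refine ⟨c, ?_, ?_⟩
  · -- multidegree property
    intro q i p v hv
    rw [hc_apply]
    by_cases hpS : p ∈ S
    · rw [hLmem q i p v hv hpS]
      exact hπ_mem _ _
    · rw [hv_zero p v hv hpS, map_zero]
      exact Submodule.zero_mem _
  · -- the expansion of Ω
    intro z i
    apply ContinuousLinearMap.coe_injective
    apply hext
    intro p v hv
    simp only [ContinuousLinearMap.coe_coe]
    rw [Finsupp.sum]
    rw [ContinuousLinearMap.sum_apply]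
    simp only [ContinuousLinearMap.smul_apply]
    by_cases hpS : p ∈ S
    swap
    · rw [hv_zero p v hv hpS]
      simp only [map_zero, smul_zero]
      rw [Finset.sum_const_zero]
    -- extend the sum to T
    rw [Finset.sum_subset Finsupp.support_onFinset_subset (fun q hqT hqs => by
      rw [Finsupp.notMem_support_iff.1 hqs]
      simp)]
    have hRHS : ∀ q ∈ T, (∏ j, z j ^ q j) • c q i v
        = (∏ j, z j ^ q j) • π (fun j => p j - q j - if j = i then 1 else 0)
            (Ω e1 i v) := by
      intro q _
      rw [hc_apply, hLmem q i p v hv hpS]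
    rw [Finset.sum_congr rfl hRHS]
    -- expand the left side
    conv_lhs => rw [← hsum (Ω z i v)]
    rw [Finset.sum_congr rfl (fun r _ => key p v hv r i z)]
    rw [← Finset.sum_filter]
    -- kill the terms of the right side outside S
    rw [← Finset.sum_filter_of_ne (p := fun q : Fin n → ℕ =>
        (fun j => p j - q j - if j = i then 1 else 0) ∈ S)
      (fun q _ hne => by
        by_contra hrS
        apply hne
        rw [hπ_bot _ hrS]
        simp)]
    -- now exhibit the bijection
    refine Finset.sum_bij' (i := fun r _ => fun j =>
        (p j - r j - if j = i then 1 else 0).toNat)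
      (j := fun q _ => fun j => p j - q j - if j = i then 1 else 0)
      ?_ ?_ ?_ ?_ ?_
    · intro r hr
      rw [Finset.mem_filter] at hr ⊢
      obtain ⟨hrS, hrP⟩ := hr
      constructor
      · rw [hT, Finset.mem_image]
        exact ⟨((p, r), i), by
          rw [Finset.mem_product, Finset.mem_product]
          exact ⟨⟨hpS, hrS⟩, Finset.mem_univ i⟩, rfl⟩
      · have : (fun j => p j - (fun j => (p j - r j -
            if j = i then 1 else 0).toNat : Fin n → ℕ) j -
            if j = i then 1 else 0) = r := by
          funext j
          have := hrP j
          beta_reduce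
          omega
        rw [this]
        exact hrS
    · intro q hq
      rw [Finset.mem_filter] at hq ⊢
      refine ⟨hq.2, ?_⟩
      intro j
      beta_reduce
      omega
    · intro r hr
      rw [Finset.mem_filter] at hr
      funext j
      have := hr.2 j
      beta_reduce
      omega
    · intro q hq
      funext j
      beta_reduce
      omega
    · intro r hr
      rw [Finset.mem_filter] at hr
      have : (fun j => p j - (fun j => (p j - r j -
          if j = i then 1 else 0).toNat : Fin n → ℕ) j -
          if j = i then 1 else 0) = r := by
        funext j
        have := hr.2 j
        beta_reduce
        omega
      rw [this]
end

section
/- Let (C_•, d) be a cochain complex of k-vector spaces with a descending filtration F (each F^p C_• a subcomplex, separated and exhaustive in each degree, all spaces possibly infinite dimensional). Equip H^k(C_•) with the induced filtration F^p H^k = im(H^k(F^p C_•) → H^k(C_•)). Then the k-th cohomology of the Rees complex (Rees(C_•), Rees(d)) over k[z], taken modulo its z-torsion, is isomorphic as a graded k[z]-module to the Rees module Rees(H^k(C_•), F). -/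
set_option maxHeartbeats 1000000
set_option synthInstance.maxHeartbeats 400000

open ToricRees

namespace Stmt16

variable {k : Type*} [Field k] {C : ℤ → Type*} [∀ j, AddCommGroup (C j)] [∀ j, Module k (C j)]

/-- The cocycles of the Rees complex in degree `j + 1`: elements of the Rees module
`Rees(C_{j+1}, F)` killed by the Rees differential (the map induced by `d_{j+1}`). -/
noncomputable def reesCocycles (dC : ∀ j : ℤ, C j →ₗ[k] C (j + 1))
    (F : ∀ j : ℤ, ℤ → Submodule k (C j)) (hF : ∀ j, IsFilt (F j)) (j : ℤ) :
    Submodule (MvPolynomial (Fin 1) k) (MIdx 1 →₀ C (j + 1)) :=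
  ReesModule (fun _ : Fin 1 => F (j + 1)) (fun _ => hF (j + 1)) ⊓
    LinearMap.ker (reesMapA (dC (j + 1)))

/-- The coboundaries of the Rees complex in degree `j + 1`: the image of the Rees module
`Rees(C_j, F)` under the Rees differential induced by `d_j`. -/
noncomputable def reesCoboundaries (dC : ∀ j : ℤ, C j →ₗ[k] C (j + 1))
    (F : ∀ j : ℤ, ℤ → Submodule k (C j)) (hF : ∀ j, IsFilt (F j)) (j : ℤ) :
    Submodule (MvPolynomial (Fin 1) k) (MIdx 1 →₀ C (j + 1)) :=
  Submodule.map (reesMapA (dC j)) (ReesModule (fun _ : Fin 1 => F j) (fun _ => hF j))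

/-- The cohomology of the Rees complex over `k[z]` in degree `j + 1`. -/
noncomputable def reesCohomology (dC : ∀ j : ℤ, C j →ₗ[k] C (j + 1))
    (F : ∀ j : ℤ, ℤ → Submodule k (C j)) (hF : ∀ j, IsFilt (F j)) (j : ℤ) :=
  ↥(reesCocycles dC F hF j) ⧸
    Submodule.comap (reesCocycles dC F hF j).subtype (reesCoboundaries dC F hF j)

noncomputable instance (dC : ∀ j : ℤ, C j →ₗ[k] C (j + 1))
    (F : ∀ j : ℤ, ℤ → Submodule k (C j)) (hF : ∀ j, IsFilt (F j)) (j : ℤ) :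
    AddCommGroup (reesCohomology dC F hF j) := by
  unfold reesCohomology; infer_instance

noncomputable instance (dC : ∀ j : ℤ, C j →ₗ[k] C (j + 1))
    (F : ∀ j : ℤ, ℤ → Submodule k (C j)) (hF : ∀ j, IsFilt (F j)) (j : ℤ) :
    Module (MvPolynomial (Fin 1) k) (reesCohomology dC F hF j) := by
  unfold reesCohomology; infer_instance

/-- The cohomology of the original complex in degree `j + 1`: `ker d_{j+1} / im d_j`. -/
noncomputable def cohomology (dC : ∀ j : ℤ, C j →ₗ[k] C (j + 1)) (j : ℤ) :=
  ↥(LinearMap.ker (dC (j + 1))) ⧸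
    Submodule.comap (LinearMap.ker (dC (j + 1))).subtype (LinearMap.range (dC j))

noncomputable instance (dC : ∀ j : ℤ, C j →ₗ[k] C (j + 1)) (j : ℤ) :
    AddCommGroup (cohomology dC j) := by
  unfold cohomology; infer_instance

noncomputable instance (dC : ∀ j : ℤ, C j →ₗ[k] C (j + 1)) (j : ℤ) :
    Module k (cohomology dC j) := by
  unfold cohomology; infer_instance

/-- The projection from cocycles to cohomology classes. -/
noncomputable def toCohomology (dC : ∀ j : ℤ, C j →ₗ[k] C (j + 1)) (j : ℤ) :
    ↥(LinearMap.ker (dC (j + 1))) →ₗ[k] cohomology dC j :=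
  (Submodule.comap (LinearMap.ker (dC (j + 1))).subtype (LinearMap.range (dC j))).mkQ

/-- The induced filtration on cohomology:
`F̄^p H^{j+1} = im(H^{j+1}(F^p C_•) → H^{j+1}(C_•))`. -/
noncomputable def inducedFilt (dC : ∀ j : ℤ, C j →ₗ[k] C (j + 1))
    (F : ∀ j : ℤ, ℤ → Submodule k (C j)) (j : ℤ) (p : ℤ) :
    Submodule k (cohomology dC j) :=
  Submodule.map (toCohomology dC j)
    (Submodule.comap (LinearMap.ker (dC (j + 1))).subtype (F (j + 1) p))

section Aux

variable (dC : ∀ j : ℤ, C j →ₗ[k] C (j + 1))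
variable (F : ∀ j : ℤ, ℤ → Submodule k (C j)) (hF : ∀ j, IsFilt (F j)) (j : ℤ)

/-- Evaluation formula for the polynomial action on Laurent modules. -/
lemma poly_smul_apply' {M : Type*} [AddCommGroup M] [Module k M]
    (p : MvPolynomial (Fin 1) k) (s : MIdx 1 →₀ M) (d : MIdx 1) :
    (p • s) d = (AddMonoidAlgebra.coeff p).sum fun a b => b • s (d - fun i => ((a i : ℤ))) := by
  rw [poly_smul_def, polyActionHom]
  erw [AddMonoidAlgebra.lift_apply]
  rw [Finsupp.sum, Finsupp.sum, LinearMap.coe_sum, Finset.sum_apply,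
    Finsupp.finset_sum_apply]
  refine Finset.sum_congr rfl fun a _ => ?_
  rw [LinearMap.smul_apply, Finsupp.smul_apply]
  congr 1
  show shiftL (k := k) (fun i => ((a i : ℤ))) s d = _
  rw [shiftL_apply]

lemma fin1_finsupp_eq (a b : Fin 1 →₀ ℕ) (h : a 0 = b 0) : a = b := by
  refine Finsupp.ext fun i => ?_
  rw [Subsingleton.elim i 0, h]

/-- The Laurent module `MIdx 1 →₀ M` is torsion-free over `k[z]`. -/
lemma laurent_torsion_free {M : Type*} [AddCommGroup M] [Module k M]
    {p : MvPolynomial (Fin 1) k} (hp : p ≠ 0) {s : MIdx 1 →₀ M}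
    (hs : p • s = 0) : s = 0 := by
  by_contra h
  classical
  set q : (Fin 1 →₀ ℕ) →₀ k := AddMonoidAlgebra.coeff p with hq
  have hsupp : s.support.Nonempty := Finsupp.support_nonempty_iff.2 h
  have hqne : q ≠ 0 := fun h => hp (AddMonoidAlgebra.ext h)
  have hpsupp : q.support.Nonempty := Finsupp.support_nonempty_iff.2 hqne
  set T : Finset ℤ := s.support.image fun e => e 0 with hT
  have hTne : T.Nonempty := hsupp.image _
  obtain ⟨d₀, hd₀, hd₀v⟩ := Finset.mem_image.1 (T.max'_mem hTne)
  set A : Finset ℕ := q.support.image fun a => a 0 with hA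
  have hAne : A.Nonempty := hpsupp.image _
  obtain ⟨a₁, ha₁, ha₁v⟩ := Finset.mem_image.1 (A.max'_mem hAne)
  have h0 : (p • s) (d₀ + fun _ => ((a₁ 0 : ℤ))) = 0 := by rw [hs]; rfl
  rw [poly_smul_apply'] at h0
  have h0' : ∑ a ∈ q.support,
      q a • s ((d₀ + fun _ => ((a₁ 0 : ℤ))) - fun i => ((a i : ℤ))) = 0 := h0
  rw [Finset.sum_eq_single_of_mem a₁ ha₁ ?side] at h0'
  · have hD : ((d₀ + fun _ => ((a₁ 0 : ℤ))) - fun i => ((a₁ i : ℤ))) = d₀ := by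
      funext i
      rw [Subsingleton.elim i 0]
      simp
    rw [hD] at h0'
    have h1 : q a₁ ≠ 0 := Finsupp.mem_support_iff.1 ha₁
    have h2 : s d₀ ≠ 0 := Finsupp.mem_support_iff.1 hd₀
    exact (smul_ne_zero h1 h2) h0'
  case side =>
    intro a ha hne
    have hlt : a 0 < a₁ 0 := by
      have hle : a 0 ≤ A.max' hAne := A.le_max' _ (Finset.mem_image_of_mem _ ha)
      rw [← ha₁v] at hle
      rcases lt_or_eq_of_le hle with h' | h'
      · exact h'
      · exact absurd (fin1_finsupp_eq a a₁ h') hne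
    set D : MIdx 1 := (d₀ + fun _ => ((a₁ 0 : ℤ))) - fun i => ((a i : ℤ)) with hD
    have hzero : s D = 0 := by
      refine Finsupp.notMem_support_iff.1 fun hmem => ?_
      have hle : D 0 ≤ T.max' hTne := T.le_max' _ (Finset.mem_image_of_mem _ hmem)
      rw [← hd₀v] at hle
      have h2 : d₀ 0 + (a₁ 0 : ℤ) - (a 0 : ℤ) ≤ d₀ 0 := hle
      omega
    rw [hzero, smul_zero]

/-- `z^N` acts by shifting indices by `N`. -/
lemma X_pow_smul {M : Type*} [AddCommGroup M] [Module k M] (N : ℕ) (s : MIdx 1 →₀ M)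
    (d : MIdx 1) :
    ((MvPolynomial.X 0 : MvPolynomial (Fin 1) k) ^ N • s) d
      = s (d - fun _ => (N : ℤ)) := by
  induction N generalizing s d with
  | zero =>
      rw [pow_zero, one_smul]
      congr 1
      funext i
      simp
  | succ N ih =>
      rw [pow_succ, mul_smul, ih]
      rw [X_smul, shiftL_apply]
      
      congr 1
      funext i
      rw [Subsingleton.elim i 0]
      simp only [Pi.sub_apply, Pi.add_apply]
      push_cast
      simp [Finsupp.single_eq_same]
      ring

lemma reesMapA_injective {V W : Type*} [AddCommGroup V] [Module k V] [AddCommGroup W]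
    [Module k W] (f : V →ₗ[k] W) (hf : Function.Injective f) :
    Function.Injective (reesMapA (n := 1) f) := by
  intro s t h
  refine Finsupp.ext fun d => hf ?_
  have := congrArg (fun u => u d) h
  simpa only [reesMapA_apply] using this

/-- Lift a Rees cocycle to a finsupp valued in the kernel of the differential. -/
noncomputable def cocycleLift (x : ↥(reesCocycles dC F hF j)) :
    MIdx 1 →₀ ↥(LinearMap.ker (dC (j + 1))) :=
  Finsupp.onFinset (x : MIdx 1 →₀ C (j + 1)).support
    (fun d => ⟨(x : MIdx 1 →₀ C (j + 1)) d, by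
      have hker : (x : MIdx 1 →₀ C (j + 1)) ∈ LinearMap.ker (reesMapA (dC (j + 1))) :=
        (Submodule.mem_inf.1 x.2).2
      have h0 : reesMapA (dC (j + 1)) (x : MIdx 1 →₀ C (j + 1)) = 0 := hker
      have := congrArg (fun u => u d) h0
      simpa only [reesMapA_apply, LinearMap.mem_ker, Finsupp.coe_zero, Pi.zero_apply] using this⟩)
    (fun d hd => by
      rw [Finsupp.mem_support_iff]
      intro h0
      exact hd (Subtype.ext h0))

lemma cocycleLift_coe (x : ↥(reesCocycles dC F hF j)) (d : MIdx 1) :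
    ((cocycleLift dC F hF j x d : ↥(LinearMap.ker (dC (j + 1)))) : C (j + 1))
      = (x : MIdx 1 →₀ C (j + 1)) d := rfl

lemma reesMapA_subtype_cocycleLift (x : ↥(reesCocycles dC F hF j)) :
    reesMapA (LinearMap.ker (dC (j + 1))).subtype (cocycleLift dC F hF j x)
      = (x : MIdx 1 →₀ C (j + 1)) :=
  Finsupp.ext fun _ => rfl

/-- The kernel-valued lift as a `k[z]`-linear map. -/
noncomputable def iotaMap :
    ↥(reesCocycles dC F hF j) →ₗ[MvPolynomial (Fin 1) k]
      (MIdx 1 →₀ ↥(LinearMap.ker (dC (j + 1)))) where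
  toFun := cocycleLift dC F hF j
  map_add' x y := by
    apply reesMapA_injective _ (Submodule.injective_subtype _)
    rw [map_add, reesMapA_subtype_cocycleLift, reesMapA_subtype_cocycleLift,
      reesMapA_subtype_cocycleLift]
    rfl
  map_smul' p x := by
    apply reesMapA_injective _ (Submodule.injective_subtype _)
    rw [RingHom.id_apply, map_smul, reesMapA_subtype_cocycleLift,
      reesMapA_subtype_cocycleLift]
    rfl

/-- The map from Rees cocycles to the Rees module of cohomology. -/
noncomputable def PhiMap :
    ↥(reesCocycles dC F hF j) →ₗ[MvPolynomial (Fin 1) k]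
      (MIdx 1 →₀ cohomology dC j) :=
  (reesMapA (toCohomology dC j)) ∘ₗ iotaMap dC F hF j

lemma PhiMap_apply (x : ↥(reesCocycles dC F hF j)) (d : MIdx 1) :
    PhiMap dC F hF j x d = toCohomology dC j (cocycleLift dC F hF j x d) := rfl

lemma PhiMap_coboundary :
    Submodule.comap (reesCocycles dC F hF j).subtype (reesCoboundaries dC F hF j)
      ≤ LinearMap.ker (PhiMap dC F hF j) := by
  intro x hx
  obtain ⟨y, hy, hxy⟩ := hx
  rw [LinearMap.mem_ker]
  refine Finsupp.ext fun d => ?_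
  rw [PhiMap_apply]
  show Submodule.Quotient.mk (cocycleLift dC F hF j x d) = (0 : cohomology dC j)
  refine (Submodule.Quotient.mk_eq_zero _).2 (Submodule.mem_comap.2 ?_)
  show ((cocycleLift dC F hF j x d : ↥(LinearMap.ker (dC (j + 1)))) : C (j + 1))
    ∈ LinearMap.range (dC j)
  rw [cocycleLift_coe]
  refine ⟨y d, ?_⟩
  have := congrArg (fun u => u d) hxy
  simpa only [reesMapA_apply, Submodule.subtype_apply] using this

/-- The induced map on Rees cohomology. -/
noncomputable def PhiBar :
    reesCohomology dC F hF j →ₗ[MvPolynomial (Fin 1) k]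
      (MIdx 1 →₀ cohomology dC j) :=
  Submodule.liftQ _ (PhiMap dC F hF j) (PhiMap_coboundary dC F hF j)

lemma PhiBar_mk (x : ↥(reesCocycles dC F hF j)) :
    PhiBar dC F hF j (Submodule.Quotient.mk x) = PhiMap dC F hF j x :=
  rfl


lemma PhiBar_range (hFbar : IsFilt (inducedFilt dC F j)) :
    LinearMap.range (PhiBar dC F hF j)
      = ReesModule (fun _ : Fin 1 => inducedFilt dC F j) (fun _ => hFbar) := by
  show LinearMap.range (Submodule.liftQ _ (PhiMap dC F hF j) (PhiMap_coboundary dC F hF j)) = _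
  rw [Submodule.range_liftQ]
  apply le_antisymm
  · rintro _ ⟨x, rfl⟩
    intro d
    refine Submodule.mem_iInf _ |>.2 fun i => ?_
    rw [PhiMap_apply]
    refine ⟨cocycleLift dC F hF j x d, Submodule.mem_comap.2 ?_, rfl⟩
    show ((cocycleLift dC F hF j x d : ↥(LinearMap.ker (dC (j + 1)))) : C (j + 1))
      ∈ F (j + 1) ((-d) i)
    rw [cocycleLift_coe]
    have hmem : (x : MIdx 1 →₀ C (j + 1))
        ∈ ReesModule (fun _ : Fin 1 => F (j + 1)) (fun _ => hF (j + 1)) :=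
      (Submodule.mem_inf.1 x.2).1
    exact Submodule.mem_iInf _ |>.1 (hmem d) i
  · intro s hs
    classical
    have hs' : ∀ d : MIdx 1, s d ∈ inducedFilt dC F j (-(d 0)) := fun d =>
      Submodule.mem_iInf _ |>.1 (hs d) 0
    have hchoice : ∀ d : MIdx 1, ∃ w : ↥(LinearMap.ker (dC (j + 1))),
        w ∈ Submodule.comap (LinearMap.ker (dC (j + 1))).subtype (F (j + 1) (-(d 0))) ∧
          toCohomology dC j w = s d := fun d => by
      obtain ⟨w, hw1, hw2⟩ := Submodule.mem_map.1 (hs' d)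
      exact ⟨w, hw1, hw2⟩
    choose w hw1 hw2 using hchoice
    set x₀ : MIdx 1 →₀ C (j + 1) := Finsupp.onFinset s.support
      (fun d => if s d = 0 then 0 else ((w d : ↥(LinearMap.ker (dC (j + 1)))) : C (j + 1)))
      (fun d hd => Finsupp.mem_support_iff.2 fun h0 => hd (by simp [h0])) with hx₀
    have hx₀apply : ∀ d, x₀ d
        = if s d = 0 then 0 else ((w d : ↥(LinearMap.ker (dC (j + 1)))) : C (j + 1)) :=
      fun _ => rfl
    have hker : ∀ d, dC (j + 1) (x₀ d) = 0 := by
      intro d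
      rw [hx₀apply]
      split_ifs with h
      · rw [map_zero]
      · exact (w d).2
    have hmem : x₀ ∈ reesCocycles dC F hF j := by
      refine Submodule.mem_inf.2 ⟨?_, ?_⟩
      · intro d
        refine Submodule.mem_iInf _ |>.2 fun i => ?_
        rw [hx₀apply]
        split_ifs with h
        · exact Submodule.zero_mem _
        · have h1 := Submodule.mem_comap.1 (hw1 d)
          have hi0 : i = 0 := Subsingleton.elim i 0
          subst hi0
          exact h1
      · rw [LinearMap.mem_ker]
        refine Finsupp.ext fun d => ?_
        show dC (j + 1) (x₀ d) = 0
        exact hker d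
    refine ⟨⟨x₀, hmem⟩, ?_⟩
    refine Finsupp.ext fun d => ?_
    rw [PhiMap_apply]
    by_cases h : s d = 0
    · have h1 : cocycleLift dC F hF j ⟨x₀, hmem⟩ d = 0 := by
        refine Subtype.ext ?_
        rw [cocycleLift_coe]
        show x₀ d = 0
        rw [hx₀apply, if_pos h]
      rw [h1, map_zero, h]
    · have h1 : cocycleLift dC F hF j ⟨x₀, hmem⟩ d = w d := by
        refine Subtype.ext ?_
        rw [cocycleLift_coe]
        show x₀ d = _
        rw [hx₀apply, if_neg h]
      rw [h1, hw2]

lemma PhiBar_ker :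
    LinearMap.ker (PhiBar dC F hF j)
      = Submodule.torsion (MvPolynomial (Fin 1) k) (reesCohomology dC F hF j) := by
  apply le_antisymm
  · intro t ht
    obtain ⟨x, rfl⟩ := Submodule.Quotient.mk_surjective _ t
    replace ht : PhiMap dC F hF j x = 0 := ht
    have hx : ∀ d : MIdx 1, (x : MIdx 1 →₀ C (j + 1)) d ∈ LinearMap.range (dC j) := by
      intro d
      have h1 : toCohomology dC j (cocycleLift dC F hF j x d) = 0 := by
        have h2 := congrArg (fun u => u d) ht
        simpa only [PhiMap_apply, Finsupp.coe_zero, Pi.zero_apply] using h2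
      have h2 := Submodule.mem_comap.1 ((Submodule.Quotient.mk_eq_zero _).1 h1)
      rw [← cocycleLift_coe dC F hF j x d]
      exact h2
    obtain ⟨P, hP⟩ := (hF j).exh
    classical
    have hNex : ∃ N : ℕ, ∀ e ∈ (x : MIdx 1 →₀ C (j + 1)).support, -(e 0) - (N : ℤ) ≤ P := by
      refine ⟨(x : MIdx 1 →₀ C (j + 1)).support.sup fun e => (-(e 0) - P).toNat, ?_⟩
      intro e he
      have h1 : (-(e 0) - P).toNat
          ≤ (x : MIdx 1 →₀ C (j + 1)).support.sup fun e => (-(e 0) - P).toNat :=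
        Finset.le_sup (f := fun e : MIdx 1 => (-(e 0) - P).toNat) he
      have h2 : -(e 0) - P ≤ ((-(e 0) - P).toNat : ℤ) := Int.self_le_toNat _
      have h3 : (((-(e 0) - P).toNat : ℕ) : ℤ)
          ≤ (((x : MIdx 1 →₀ C (j + 1)).support.sup fun e => (-(e 0) - P).toNat : ℕ) : ℤ) :=
        Int.ofNat_le.2 h1
      linarith
    obtain ⟨N, hNle⟩ := hNex
    set y : MIdx 1 → C j := fun d => (hx d).choose with hy
    have hyspec : ∀ d, dC j (y d) = (x : MIdx 1 →₀ C (j + 1)) d := fun d => (hx d).choose_spec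
    set v : MIdx 1 →₀ C j := Finsupp.onFinset (x : MIdx 1 →₀ C (j + 1)).support
      (fun e => if (x : MIdx 1 →₀ C (j + 1)) e = 0 then 0 else y e)
      (fun e he => Finsupp.mem_support_iff.2 fun h0 => he (by simp [h0])) with hv
    have hvapply : ∀ e, v e
        = if (x : MIdx 1 →₀ C (j + 1)) e = 0 then 0 else y e := fun _ => rfl
    have humem : shiftL (k := k) (fun _ => (N : ℤ)) v
        ∈ ReesModule (fun _ : Fin 1 => F j) (fun _ => hF j) := by
      intro d
      rw [shiftL_apply]
      refine Submodule.mem_iInf _ |>.2 fun i => ?_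
      rw [hvapply]
      split_ifs with h
      · exact Submodule.zero_mem _
      · have he : (d - fun _ => (N : ℤ)) ∈ (x : MIdx 1 →₀ C (j + 1)).support :=
          Finsupp.mem_support_iff.2 h
        have h2 := hNle _ he
        have hi0 : i = 0 := Subsingleton.elim i 0
        subst hi0
        have h3 : ((-d) 0) ≤ P := by
          show -(d 0) ≤ P
          have h4 : ((d - fun _ => (N : ℤ)) : MIdx 1) 0 = d 0 - N := rfl
          omega
        have h5 : F j ((-d) 0) = ⊤ := hP _ h3
        show y (d - fun _ => (N : ℤ)) ∈ F j ((-d) 0)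
        rw [h5]
        trivial
    have him : reesMapA (dC j) (shiftL (k := k) (fun _ => (N : ℤ)) v)
        = ((MvPolynomial.X 0 : MvPolynomial (Fin 1) k) ^ N) • (x : MIdx 1 →₀ C (j + 1)) := by
      refine Finsupp.ext fun d => ?_
      rw [reesMapA_apply, shiftL_apply, X_pow_smul, hvapply]
      split_ifs with h
      · rw [map_zero, h]
      · rw [hyspec]
    refine (Submodule.mem_torsion_iff _).2
      ⟨⟨(MvPolynomial.X 0) ^ N,
        mem_nonZeroDivisors_of_ne_zero (pow_ne_zero _ (MvPolynomial.X_ne_zero _))⟩, ?_⟩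
    show ((MvPolynomial.X 0 : MvPolynomial (Fin 1) k) ^ N) •
        (Submodule.Quotient.mk x : reesCohomology dC F hF j) = 0
    have hsm : (((MvPolynomial.X 0 : MvPolynomial (Fin 1) k) ^ N) •
        (Submodule.Quotient.mk x : reesCohomology dC F hF j))
        = Submodule.Quotient.mk (((MvPolynomial.X 0 : MvPolynomial (Fin 1) k) ^ N) • x) :=
      (Submodule.Quotient.mk_smul _ _ _).symm
    rw [hsm]
    refine (Submodule.Quotient.mk_eq_zero _).2 (Submodule.mem_comap.2 ?_)
    show ((((MvPolynomial.X 0 : MvPolynomial (Fin 1) k) ^ N) • x :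
        ↥(reesCocycles dC F hF j)) : MIdx 1 →₀ C (j + 1)) ∈ reesCoboundaries dC F hF j
    rw [Submodule.coe_smul]
    exact ⟨shiftL (k := k) (fun _ => (N : ℤ)) v, humem, him⟩
  · intro t ht
    obtain ⟨⟨p, hp⟩, hpt⟩ := (Submodule.mem_torsion_iff _).1 ht
    rw [LinearMap.mem_ker]
    have h0 : p • t = 0 := hpt
    have h1 : p • PhiBar dC F hF j t = 0 := by
      rw [← map_smul, h0, map_zero]
    exact laurent_torsion_free (mem_nonZeroDivisors_iff_ne_zero.1 hp) h1

end Aux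

/-- For a filtered cochain complex `(C_•, d)` of `k`-vector spaces, with
filtration `F` by subcomplexes, descending, separated and exhaustive in each degree, the
degree-`j+1` cohomology of the Rees complex `(Rees(C_•,F), Rees(d))` over `k[z]`, taken
modulo its torsion submodule, is isomorphic as a (graded) `k[z]`-module to the Rees module
of `H^{j+1}(C_•)` with its induced filtration.  The isomorphism sends the class of a Rees
cocycle `x` to the degreewise family of the cohomology classes of its components. -/
theorem rees_cohomology_mod_torsion (dC : ∀ j : ℤ, C j →ₗ[k] C (j + 1))
    (F : ∀ j : ℤ, ℤ → Submodule k (C j)) (hF : ∀ j, IsFilt (F j))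
    (hdF : ∀ j p, (F j p).map (dC j) ≤ F (j + 1) p)
    (hdd : ∀ (j : ℤ) (x : C j), dC (j + 1) (dC j x) = 0) (j : ℤ)
    (hFbar : IsFilt (inducedFilt dC F j)) :
    ∃ e : (reesCohomology dC F hF j ⧸
            Submodule.torsion (MvPolynomial (Fin 1) k) (reesCohomology dC F hF j))
          ≃ₗ[MvPolynomial (Fin 1) k]
          ↥(ReesModule (fun _ : Fin 1 => inducedFilt dC F j) (fun _ => hFbar)),
      ∀ (x : ↥(reesCocycles dC F hF j)) (c : MIdx 1 →₀ ↥(LinearMap.ker (dC (j + 1)))),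
        (∀ g : MIdx 1, (c g : C (j + 1)) = (x : MIdx 1 →₀ C (j + 1)) g) →
        ∀ g : MIdx 1,
          ((e (Submodule.Quotient.mk (Submodule.Quotient.mk x)) : _)
              : MIdx 1 →₀ cohomology dC j) g
            = toCohomology dC j (c g) := by
  classical
  refine ⟨(Submodule.quotEquivOfEq _ _ (PhiBar_ker dC F hF j).symm).trans
    ((PhiBar dC F hF j).quotKerEquivRange.trans
      (LinearEquiv.ofEq _ _ (PhiBar_range dC F hF j hFbar))), ?_⟩
  intro x c hc g
  have hcg : c g = cocycleLift dC F hF j x g := by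
    refine Subtype.ext ?_
    rw [cocycleLift_coe]
    exact hc g
  have he : (((Submodule.quotEquivOfEq _ _ (PhiBar_ker dC F hF j).symm).trans
      ((PhiBar dC F hF j).quotKerEquivRange.trans
        (LinearEquiv.ofEq _ _ (PhiBar_range dC F hF j hFbar))))
      (Submodule.Quotient.mk (Submodule.Quotient.mk x)) : MIdx 1 →₀ cohomology dC j)
      = PhiMap dC F hF j x := by
    rw [LinearEquiv.trans_apply]
    erw [Submodule.quotEquivOfEq_mk]
    rw [LinearEquiv.trans_apply,
      LinearEquiv.coe_ofEq_apply]
    exact (PhiBar dC F hF j).quotKerEquivRange_apply_mk _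
  rw [he]
  show PhiMap dC F hF j x g = toCohomology dC j (c g)
  rw [PhiMap_apply, hcg]

end Stmt16
end
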